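/- arXiv:1603.07991 — 3 statements merged into one kernel-verified Lean document; each statement's English description precedes it below -/
import Mathlib

section
/- Any connected configuration of n ≥ 2 particles on the triangular lattice with no holes has perimeter at least √n. -/
open Finset

/-- The six neighbor displacement vectors of the triangular lattice Γ, realized on ℤ × ℤ. -/
def triNbrs : List (ℤ × ℤ) := [(1,0), (-1,0), (0,1), (0,-1), (1,1), (-1,-1)]

/-- Translation of a lattice point by a displacement. -/
def shift (v d : ℤ × ℤ) : ℤ × ℤ := (v.1 + d.1, v.2 + d.2)

/-- Adjacency in the triangular lattice Γ. -/
def TriAdj (v w : ℤ × ℤ) : Prop := (w.1 - v.1, w.2 - v.2) ∈ triNbrs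

/-- A particle configuration: a finite set of occupied vertices of Γ. -/
abbrev Config := Finset (ℤ × ℤ)

/-- A configuration is connected if it is nonempty and any two occupied vertices are
joined by a path through occupied vertices. -/
def ConnectedConfig (σ : Config) : Prop :=
  σ.Nonempty ∧ ∀ v ∈ σ, ∀ w ∈ σ,
    Relation.ReflTransGen (fun a b => TriAdj a b ∧ a ∈ σ ∧ b ∈ σ) v w

/-- The connected component of a vertex within the set of unoccupied vertices. -/
def compComponent (σ : Config) (v : ℤ × ℤ) : Set (ℤ × ℤ) :=
  {w | Relation.ReflTransGen (fun a b => TriAdj a b ∧ a ∉ σ ∧ b ∉ σ) v w}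

/-- A hole is a finite maximal component of unoccupied vertices; σ is hole-free
exactly when every unoccupied vertex lies in an infinite component of unoccupied vertices. -/
def HoleFree (σ : Config) : Prop := ∀ v, v ∉ σ → (compComponent σ v).Infinite

/-- Number of triangles of σ: lattice faces with all three vertices occupied.
The faces of Γ are the upward faces {v, v+(1,0), v+(1,1)} and the downward faces
{v, v+(0,1), v+(1,1)}. -/
def triangles (σ : Config) : ℕ :=
  (σ.filter (fun v => shift v (1,0) ∈ σ ∧ shift v (1,1) ∈ σ)).card +
  (σ.filter (fun v => shift v (0,1) ∈ σ ∧ shift v (1,1) ∈ σ)).card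

/-- Number of edges of σ: lattice edges with both endpoints occupied. -/
def edges (σ : Config) : ℕ :=
  (σ.filter (fun v => shift v (1,0) ∈ σ)).card +
  (σ.filter (fun v => shift v (0,1) ∈ σ)).card +
  (σ.filter (fun v => shift v (1,1) ∈ σ)).card

/-- Perimeter of σ: the length of the boundary walk around σ.  For a connected
hole-free configuration, the boundary walk traverses each occupied edge once for
each of its two adjacent lattice faces that is not fully occupied (so an edge
traversed twice is counted twice).  The two faces adjacent to the edge v–v+(1,0)
have third vertices v+(1,1) and v+(0,-1); those adjacent to v–v+(0,1) have third
vertices v+(1,1) and v+(-1,0); those adjacent to v–v+(1,1) have third vertices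
v+(1,0) and v+(0,1). -/
def perim (σ : Config) : ℕ :=
  (∑ v ∈ σ.filter (fun v => shift v (1,0) ∈ σ),
    ((if shift v (1,1) ∈ σ then 0 else 1) + (if shift v (0,-1) ∈ σ then 0 else 1))) +
  (∑ v ∈ σ.filter (fun v => shift v (0,1) ∈ σ),
    ((if shift v (1,1) ∈ σ then 0 else 1) + (if shift v (-1,0) ∈ σ then 0 else 1))) +
  (∑ v ∈ σ.filter (fun v => shift v (1,1) ∈ σ),
    ((if shift v (1,0) ∈ σ then 0 else 1) + (if shift v (0,1) ∈ σ then 0 else 1)))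

/-- Lexicographic order on lattice points, used to normalize configurations up to
translation. -/
def lexLe (a b : ℤ × ℤ) : Prop := a.1 < b.1 ∨ (a.1 = b.1 ∧ a.2 ≤ b.2)

/-- A configuration is normalized if its lexicographically least vertex is the origin;
each translation equivalence class of configurations contains exactly one normalized
representative, so normalized configurations count configurations up to translation. -/
def Normalized (σ : Config) : Prop := ((0,0) : ℤ × ℤ) ∈ σ ∧ ∀ v ∈ σ, lexLe (0,0) v

/-- A function is subexponential if it is eventually dominated by every exponential. -/
def Subexp (f : ℕ → ℝ) : Prop := ∀ c : ℝ, 1 < c → ∀ᶠ k in Filter.atTop, f k ≤ c ^ k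

def eDir (i : Fin 6) : ℤ × ℤ := if i.val ≤ 1 then (1,0) else if i.val ≤ 3 then (0,1) else (1,1)
def tDir (i : Fin 6) : ℤ × ℤ :=
  if i.val = 0 ∨ i.val = 2 then (1,1) else if i.val = 1 then (0,-1)
  else if i.val = 3 then (-1,0) else if i.val = 4 then (1,0) else (0,1)

@[simp] lemma eDir0 : eDir 0 = (1,0) := rfl
@[simp] lemma eDir1 : eDir 1 = (1,0) := rfl
@[simp] lemma eDir2 : eDir 2 = (0,1) := rfl
@[simp] lemma eDir3 : eDir 3 = (0,1) := rfl
@[simp] lemma eDir4 : eDir 4 = (1,1) := rfl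
@[simp] lemma eDir5 : eDir 5 = (1,1) := rfl
@[simp] lemma tDir0 : tDir 0 = (1,1) := rfl
@[simp] lemma tDir1 : tDir 1 = (0,-1) := rfl
@[simp] lemma tDir2 : tDir 2 = (1,1) := rfl
@[simp] lemma tDir3 : tDir 3 = (-1,0) := rfl
@[simp] lemma tDir4 : tDir 4 = (1,0) := rfl
@[simp] lemma tDir5 : tDir 5 = (0,1) := rfl

def slotSet (σ : Config) (i : Fin 6) : Finset (ℤ × ℤ) :=
  σ.filter (fun v => shift v (eDir i) ∈ σ ∧ shift v (tDir i) ∉ σ)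

def Tok (σ : Config) : Finset ((ℤ × ℤ) × Fin 6) :=
  (Finset.univ : Finset (Fin 6)).biUnion (fun i => (slotSet σ i).image (fun v => (v, i)))

lemma mem_tok {σ : Config} {v : ℤ × ℤ} {i : Fin 6} :
    (v, i) ∈ Tok σ ↔ v ∈ slotSet σ i := by
  simp only [Tok, Finset.mem_biUnion, Finset.mem_image, Finset.mem_univ, true_and,
    Prod.mk.injEq]
  constructor
  · rintro ⟨j, w, hw, rfl, rfl⟩; exact hw
  · intro h; exact ⟨i, v, h, rfl, rfl⟩

lemma group_sum (σ : Config) (e a b : ℤ × ℤ) :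
    (∑ v ∈ σ.filter (fun v => shift v e ∈ σ),
      ((if shift v a ∈ σ then 0 else 1) + (if shift v b ∈ σ then 0 else 1))) =
    (σ.filter (fun v => shift v e ∈ σ ∧ shift v a ∉ σ)).card +
    (σ.filter (fun v => shift v e ∈ σ ∧ shift v b ∉ σ)).card := by
  rw [Finset.sum_add_distrib]
  congr 1 <;>
  · rw [← Finset.filter_filter, Finset.card_filter]
    exact Finset.sum_congr rfl fun v _ => by split_ifs <;> simp_all

lemma card_tok (σ : Config) : (Tok σ).card = ∑ i : Fin 6, (slotSet σ i).card := by
  rw [Tok, Finset.card_biUnion]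
  · exact Finset.sum_congr rfl fun i _ =>
      Finset.card_image_of_injective _ (fun x y h => (Prod.mk.injEq _ _ _ _).mp h |>.1)
  · intro i _ j _ hij
    simp only [Finset.disjoint_left, Finset.mem_image]
    rintro p ⟨w, hw, rfl⟩ ⟨w', hw', h⟩
    exact hij ((Prod.mk.injEq _ _ _ _).mp h).2.symm

lemma perim_eq_card_tok (σ : Config) : perim σ = (Tok σ).card := by
  rw [card_tok, Fin.sum_univ_six, perim, group_sum, group_sum, group_sum]
  simp only [slotSet, eDir0, eDir1, eDir2, eDir3, eDir4, eDir5,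
    tDir0, tDir1, tDir2, tDir3, tDir4, tDir5]
  simp only [← add_assoc]
  rfl

/-- Heights of edges of σ crossing the vertical line x + 1/2. -/
def Kx (σ : Config) (x : ℤ) : Finset ℤ :=
  ((σ.filter (fun v => v.1 = x ∧ shift v (1,0) ∈ σ)).image (fun v => 2*v.2)) ∪
  ((σ.filter (fun v => v.1 = x ∧ shift v (1,1) ∈ σ)).image (fun v => 2*v.2+1))

lemma memH {σ : Config} {x y : ℤ} (h1 : (x,y) ∈ σ) (h2 : (x+1,y) ∈ σ) :
    2*y ∈ Kx σ x := by
  apply Finset.mem_union_left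
  exact Finset.mem_image.2 ⟨(x,y), Finset.mem_filter.2 ⟨h1, rfl, by simpa [shift] using h2⟩, rfl⟩

lemma memD {σ : Config} {x y : ℤ} (h1 : (x,y) ∈ σ) (h2 : (x+1,y+1) ∈ σ) :
    2*y+1 ∈ Kx σ x := by
  apply Finset.mem_union_right
  exact Finset.mem_image.2 ⟨(x,y), Finset.mem_filter.2 ⟨h1, rfl, by simpa [shift] using h2⟩, rfl⟩

lemma kx_elim {σ : Config} {x h : ℤ} (hh : h ∈ Kx σ x) :
    ∃ y, (h = 2*y ∧ (x,y) ∈ σ ∧ (x+1,y) ∈ σ) ∨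
         (h = 2*y+1 ∧ (x,y) ∈ σ ∧ (x+1,y+1) ∈ σ) := by
  rcases Finset.mem_union.1 hh with h' | h' <;>
  · obtain ⟨v, hv, rfl⟩ := Finset.mem_image.1 h'
    obtain ⟨hvσ, hx, he⟩ := Finset.mem_filter.1 hv
    refine ⟨v.2, ?_⟩
    simp only [shift] at he
    first
    | exact Or.inl ⟨rfl, by rw [← hx]; simpa using hvσ, by rw [← hx]; simpa using he⟩
    | exact Or.inr ⟨rfl, by rw [← hx]; simpa using hvσ, by rw [← hx]; simpa using he⟩

def topTok (σ : Config) (x : ℤ) : (ℤ × ℤ) × Fin 6 :=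
  ((x, ((Kx σ x).max.unbotD 0)/2), if ((Kx σ x).max.unbotD 0) % 2 = 0 then 0 else 5)

def botTok (σ : Config) (x : ℤ) : (ℤ × ℤ) × Fin 6 :=
  ((x, ((Kx σ x).min.untopD 0)/2), if ((Kx σ x).min.untopD 0) % 2 = 0 then 1 else 4)

lemma topTok_mem {σ : Config} {x : ℤ} (hne : (Kx σ x).Nonempty) : topTok σ x ∈ Tok σ := by
  have hunbot : (Kx σ x).max.unbotD 0 = (Kx σ x).max' hne := by
    rw [← Finset.coe_max' hne]; rfl
  obtain ⟨y, hy⟩ := kx_elim (Finset.max'_mem _ hne)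
  have hle : ∀ g ∈ Kx σ x, g ≤ (Kx σ x).max' hne := fun g hg => Finset.le_max' _ g hg
  rcases hy with ⟨h1, h2, h3⟩ | ⟨h1, h2, h3⟩
  · have hmod : (Kx σ x).max' hne % 2 = 0 := by omega
    have hdiv : (Kx σ x).max' hne / 2 = y := by omega
    rw [topTok, hunbot, hdiv, if_pos hmod, mem_tok]
    refine Finset.mem_filter.2 ⟨h2, by simpa [shift] using h3, fun hc => ?_⟩
    have := hle _ (memD h2 (by simpa [shift] using hc))
    omega
  · have hmod : ¬ ((Kx σ x).max' hne % 2 = 0) := by omega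
    have hdiv : (Kx σ x).max' hne / 2 = y := by omega
    rw [topTok, hunbot, hdiv, if_neg hmod, mem_tok]
    refine Finset.mem_filter.2 ⟨h2, by simpa [shift] using h3, fun hc => ?_⟩
    have hc' : (x, y+1) ∈ σ := by simpa [shift] using hc
    have := hle _ (memH hc' (by simpa [shift] using h3))
    omega

lemma botTok_mem {σ : Config} {x : ℤ} (hne : (Kx σ x).Nonempty) : botTok σ x ∈ Tok σ := by
  have huntop : (Kx σ x).min.untopD 0 = (Kx σ x).min' hne := by
    rw [← Finset.coe_min' hne]; rfl
  obtain ⟨y, hy⟩ := kx_elim (Finset.min'_mem _ hne)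
  have hle : ∀ g ∈ Kx σ x, (Kx σ x).min' hne ≤ g := fun g hg => Finset.min'_le _ g hg
  rcases hy with ⟨h1, h2, h3⟩ | ⟨h1, h2, h3⟩
  · have hmod : (Kx σ x).min' hne % 2 = 0 := by omega
    have hdiv : (Kx σ x).min' hne / 2 = y := by omega
    rw [botTok, huntop, hdiv, if_pos hmod, mem_tok]
    refine Finset.mem_filter.2 ⟨h2, by simpa [shift] using h3, fun hc => ?_⟩
    have hc' : (x, y-1) ∈ σ := by simpa [shift, sub_eq_add_neg] using hc
    have := hle _ (memD hc' (by simpa using h3))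
    omega
  · have hmod : ¬ ((Kx σ x).min' hne % 2 = 0) := by omega
    have hdiv : (Kx σ x).min' hne / 2 = y := by omega
    rw [botTok, huntop, hdiv, if_neg hmod, mem_tok]
    refine Finset.mem_filter.2 ⟨h2, by simpa [shift] using h3, fun hc => ?_⟩
    have := hle _ (memH h2 (by simpa [shift] using hc))
    omega

lemma two_mul_le_card_tok {σ : Config} {x0 x1 : ℤ}
    (hK : ∀ x, x0 ≤ x → x < x1 → (Kx σ x).Nonempty) :
    2 * (x1 - x0).toNat ≤ (Tok σ).card := by
  have hcard : ((Finset.Icc x0 (x1-1)) ×ˢ (Finset.univ : Finset Bool)).card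
      = (x1 - x0).toNat * 2 := by
    rw [Finset.card_product, Int.card_Icc]
    simp only [Finset.card_univ, Fintype.card_bool]
    omega
  rw [mul_comm, ← hcard]
  apply Finset.card_le_card_of_injOn
    (fun p => cond p.2 (topTok σ p.1) (botTok σ p.1))
  · rintro ⟨x, b⟩ hx
    rw [Finset.mem_coe, Finset.mem_product, Finset.mem_Icc] at hx
    have hne := hK x hx.1.1 (by omega)
    cases b
    · exact botTok_mem hne
    · exact topTok_mem hne
  · rintro ⟨x, b⟩ hx ⟨x', b'⟩ hx' heq
    have h1 : cond b (topTok σ x) (botTok σ x) = cond b' (topTok σ x') (botTok σ x') := heq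
    cases b <;> cases b' <;> dsimp only [cond] at h1
    · have hxx : x = x' := congrArg (fun q => q.1.1) h1
      simp [hxx]
    · exfalso
      have h2 := congrArg Prod.snd h1
      simp only [botTok, topTok] at h2
      split_ifs at h2 <;> exact absurd h2 (by decide)
    · exfalso
      have h2 := congrArg Prod.snd h1
      simp only [botTok, topTok] at h2
      split_ifs at h2 <;> exact absurd h2 (by decide)
    · have hxx : x = x' := congrArg (fun q => q.1.1) h1
      simp [hxx]

lemma adj_fst {a b : ℤ × ℤ} (h : TriAdj a b) :
    b.1 = a.1 - 1 ∨ b.1 = a.1 ∨ b.1 = a.1 + 1 := by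
  rcases a with ⟨a1, a2⟩; rcases b with ⟨b1, b2⟩
  simp only [TriAdj, triNbrs, List.mem_cons, List.mem_singleton, Prod.mk.injEq,
    List.not_mem_nil, or_false] at h
  rcases h with ⟨h1, _⟩ | ⟨h1, _⟩ | ⟨h1, _⟩ | ⟨h1, _⟩ | ⟨h1, _⟩ | ⟨h1, _⟩ <;> simp <;> omega

lemma cross_of_path {σ : Config} {v w : ℤ × ℤ}
    (h : Relation.ReflTransGen (fun a b => TriAdj a b ∧ a ∈ σ ∧ b ∈ σ) v w) :
    ∀ x, v.1 ≤ x → x < w.1 → (Kx σ x).Nonempty := by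
  induction h with
  | refl => intro x h1 h2; omega
  | @tail b c hpath hbc ih =>
    intro x h1 h2
    by_cases hb : x < b.1
    · exact ih x h1 hb
    · obtain ⟨hadj, hbs, hcs⟩ := hbc
      have hfst := adj_fst hadj
      have hbx : b.1 = x := by omega
      have hcx : c.1 = x + 1 := by omega
      rcases b with ⟨b1, b2⟩; rcases c with ⟨c1, c2⟩
      simp only [TriAdj, triNbrs, List.mem_cons, List.mem_singleton, Prod.mk.injEq,
        List.not_mem_nil, or_false] at hadj
      simp only at hbx hcx h2 hfst
      rcases hadj with ⟨h1', h2'⟩ | ⟨h1', h2'⟩ | ⟨h1', h2'⟩ | ⟨h1', h2'⟩ | ⟨h1', h2'⟩ | ⟨h1', h2'⟩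
      · -- (1,0)
        refine ⟨2*b2, memH ?_ ?_⟩ <;> [skip; skip]
        · rwa [← hbx]
        · have : (c1, c2) = (x+1, b2) := by simp; omega
          rwa [this] at hcs
      · omega
      · omega
      · omega
      · -- (1,1)
        refine ⟨2*b2+1, memD ?_ ?_⟩
        · rwa [← hbx]
        · have : (c1, c2) = (x+1, b2+1) := by simp; omega
          rwa [this] at hcs
      · omega

lemma mem_swap {σ : Config} {w : ℤ × ℤ} : w ∈ σ.image Prod.swap ↔ w.swap ∈ σ := by
  constructor
  · intro h; obtain ⟨a, ha, rfl⟩ := Finset.mem_image.1 h; simpa using ha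
  · intro h; exact Finset.mem_image.2 ⟨w.swap, h, Prod.swap_swap _⟩

lemma shift_swap (v d : ℤ × ℤ) : shift (Prod.swap v) d = Prod.swap (shift v d.swap) := rfl

lemma sum_swap_group (σ : Config) (e a b : ℤ × ℤ) :
    (∑ v ∈ (σ.image Prod.swap).filter (fun v => shift v e ∈ σ.image Prod.swap),
      ((if shift v a ∈ σ.image Prod.swap then 0 else 1) +
       (if shift v b ∈ σ.image Prod.swap then (0:ℕ) else 1))) =
    ∑ v ∈ σ.filter (fun v => shift v e.swap ∈ σ),
      ((if shift v a.swap ∈ σ then 0 else 1) + (if shift v b.swap ∈ σ then 0 else 1)) := by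
  rw [Finset.filter_image, Finset.sum_image (fun x hx y hy h => Prod.swap_injective h)]
  apply Finset.sum_congr
  · apply Finset.filter_congr
    intro v hv
    rw [shift_swap, mem_swap, Prod.swap_swap]
  · intro v hv
    simp only [shift_swap, mem_swap, Prod.swap_swap]

lemma perim_swap (σ : Config) : perim (σ.image Prod.swap) = perim σ := by
  rw [perim, perim, sum_swap_group, sum_swap_group, sum_swap_group]
  simp only [Prod.swap_prod_mk]
  have h3 : (∑ v ∈ σ.filter (fun v => shift v (1,1) ∈ σ),
      ((if shift v (0,1) ∈ σ then (0:ℕ) else 1) + (if shift v (1,0) ∈ σ then 0 else 1))) =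
      ∑ v ∈ σ.filter (fun v => shift v (1,1) ∈ σ),
      ((if shift v (1,0) ∈ σ then 0 else 1) + (if shift v (0,1) ∈ σ then 0 else 1)) :=
    Finset.sum_congr rfl (fun v _ => add_comm _ _)
  rw [h3]
  ring

lemma triAdj_swap {a b : ℤ × ℤ} (h : TriAdj a b) : TriAdj a.swap b.swap := by
  rcases a with ⟨a1, a2⟩; rcases b with ⟨b1, b2⟩
  simp only [TriAdj, triNbrs, List.mem_cons, List.mem_singleton, Prod.mk.injEq,
    List.not_mem_nil, or_false, Prod.swap_prod_mk] at h ⊢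
  omega

lemma conn_swap {σ : Config} (h : ConnectedConfig σ) :
    ConnectedConfig (σ.image Prod.swap) := by
  obtain ⟨hne, hpath⟩ := h
  refine ⟨hne.image _, fun v hv w hw => ?_⟩
  have hv' : v.swap ∈ σ := mem_swap.1 hv
  have hw' : w.swap ∈ σ := mem_swap.1 hw
  have := Relation.ReflTransGen.lift
    (p := fun a b => TriAdj a b ∧ a ∈ σ.image Prod.swap ∧ b ∈ σ.image Prod.swap) Prod.swap (fun a b (hab : TriAdj a b ∧ a ∈ σ ∧ b ∈ σ) => ⟨triAdj_swap hab.1, mem_swap.2 (by simpa using hab.2.1),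
      mem_swap.2 (by simpa using hab.2.2)⟩) _ _ (hpath v.swap hv' w.swap hw')
  simpa [Function.onFun] using this

theorem min_perimeter_sqrt' (σ : Config) (n : ℕ) (hn : 2 ≤ n)
    (hcard : σ.card = n) (hconn : ConnectedConfig σ) :
    Real.sqrt n ≤ (perim σ : ℝ) := by
  obtain ⟨hne, hpath⟩ := hconn
  set X := σ.image Prod.fst with hX
  set Y := σ.image Prod.snd with hY
  have hXne : X.Nonempty := hne.image _
  have hYne : Y.Nonempty := hne.image _
  set xmin := X.min' hXne
  set xmax := X.max' hXne
  set ymin := Y.min' hYne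
  set ymax := Y.max' hYne
  have hxle : xmin ≤ xmax := Finset.min'_le _ _ (Finset.max'_mem _ _)
  have hyle : ymin ≤ ymax := Finset.min'_le _ _ (Finset.max'_mem _ _)
  -- box bound
  have hsub : σ ⊆ Finset.Icc xmin xmax ×ˢ Finset.Icc ymin ymax := by
    intro v hv
    rw [Finset.mem_product, Finset.mem_Icc, Finset.mem_Icc]
    exact ⟨⟨Finset.min'_le _ _ (Finset.mem_image_of_mem _ hv),
        Finset.le_max' _ _ (Finset.mem_image_of_mem _ hv)⟩,
      ⟨Finset.min'_le _ _ (Finset.mem_image_of_mem _ hv),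
        Finset.le_max' _ _ (Finset.mem_image_of_mem _ hv)⟩⟩
  set A := (xmax - xmin).toNat with hA
  set B := (ymax - ymin).toNat with hB
  have hbox : n ≤ (A + 1) * (B + 1) := by
    rw [← hcard]
    calc σ.card ≤ _ := Finset.card_le_card hsub
    _ = (A + 1) * (B + 1) := by
        rw [Finset.card_product, Int.card_Icc, Int.card_Icc]
        congr 1 <;> omega
  -- horizontal bound
  obtain ⟨v, hv, hvx⟩ := Finset.mem_image.1 (Finset.min'_mem X hXne)
  obtain ⟨w, hw, hwx⟩ := Finset.mem_image.1 (Finset.max'_mem X hXne)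
  have h2A : 2 * A ≤ perim σ := by
    rw [perim_eq_card_tok]
    exact two_mul_le_card_tok (fun x h1 h2 =>
      cross_of_path (hpath v hv w hw) x (by omega) (by omega))
  -- vertical bound via swap
  obtain ⟨v', hv', hvy⟩ := Finset.mem_image.1 (Finset.min'_mem Y hYne)
  obtain ⟨w', hw', hwy⟩ := Finset.mem_image.1 (Finset.max'_mem Y hYne)
  have hconn' := conn_swap ⟨hne, hpath⟩
  have h2B : 2 * B ≤ perim σ := by
    rw [← perim_swap σ, perim_eq_card_tok]
    refine two_mul_le_card_tok (x0 := ymin) (x1 := ymax) (fun y h1 h2 => ?_)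
    have hp := hconn'.2 v'.swap (mem_swap.2 (by simpa using hv'))
      w'.swap (mem_swap.2 (by simpa using hw'))
    exact cross_of_path hp y (by simp [Prod.swap]; omega) (by simp [Prod.swap]; omega)
  -- arithmetic
  set p := perim σ with hp
  have hnp : n ≤ p * p := by
    have hAB : ¬ (A = 0 ∧ B = 0) := by
      rintro ⟨hA0, hB0⟩
      rw [hA0, hB0] at hbox
      omega
    have hp2 : 2 ≤ p := by omega
    have h4 : 4 * n ≤ (2*A+2) * (2*B+2) := by nlinarith
    have h5 : (2*A+2) * (2*B+2) ≤ (p+2) * (p+2) := Nat.mul_le_mul (by omega) (by omega)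
    have h6 : (p+2) * (p+2) ≤ (2*p) * (2*p) := Nat.mul_le_mul (by omega) (by omega)
    have h7 : (2*p) * (2*p) = 4 * (p*p) := by ring
    omega
  have hnp' : (n:ℝ) ≤ (p:ℝ) * (p:ℝ) := by exact_mod_cast hnp
  calc Real.sqrt n ≤ Real.sqrt ((p:ℝ) * (p:ℝ)) := Real.sqrt_le_sqrt hnp'
  _ = p := Real.sqrt_mul_self (by positivity)

/-- Lemma 1 of the paper: any connected configuration of n ≥ 2
particles on the triangular lattice with no holes has perimeter at least √n. -/
theorem min_perimeter_sqrt (σ : Config) (n : ℕ) (hn : 2 ≤ n)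
    (hcard : σ.card = n) (hconn : ConnectedConfig σ) (hhole : HoleFree σ) :
    Real.sqrt n ≤ (perim σ : ℝ) :=
  min_perimeter_sqrt' σ n hn hcard hconn
end

section
/- For a connected particle configuration σ of n particles on the triangular lattice with no holes, the number of edges satisfies e(σ) = 3n − p(σ) − 3. -/
open Finset

open Finset






lemma triAdj_iff {v w : ℤ × ℤ} : TriAdj v w ↔
    (w.1 = v.1 + 1 ∧ w.2 = v.2) ∨ (w.1 = v.1 - 1 ∧ w.2 = v.2) ∨
    (w.1 = v.1 ∧ w.2 = v.2 + 1) ∨ (w.1 = v.1 ∧ w.2 = v.2 - 1) ∨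
    (w.1 = v.1 + 1 ∧ w.2 = v.2 + 1) ∨ (w.1 = v.1 - 1 ∧ w.2 = v.2 - 1) := by
  simp only [TriAdj, triNbrs, List.mem_cons, List.not_mem_nil, or_false, Prod.mk.injEq]
  constructor <;> intro h <;> omega

lemma triAdj_symm {v w : ℤ × ℤ} (h : TriAdj v w) : TriAdj w v := by
  rw [triAdj_iff] at h ⊢; omega

lemma triAdj_shift (v : ℤ × ℤ) {d : ℤ × ℤ} (hd : d ∈ triNbrs) : TriAdj v (shift v d) := by
  simp only [triNbrs, List.mem_cons, List.not_mem_nil, or_false] at hd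
  rw [triAdj_iff]
  rcases hd with h|h|h|h|h|h <;> subst h <;> simp [shift] <;> omega

/-- integer crossing number of the horizontal ray from (just above-right of) u
with the directed segment p → q. -/
def crossZ (u p q : ℤ × ℤ) : ℤ :=
  (if p.2 = u.2 ∧ q.2 = u.2 + 1 ∧ u.1 < p.1 then 1 else 0) -
  (if q.2 = u.2 ∧ p.2 = u.2 + 1 ∧ u.1 < q.1 then 1 else 0)

/-- winding sum along a list-walk starting at x. -/
def wind (u : ℤ × ℤ) : ℤ × ℤ → List (ℤ × ℤ) → ℤ
  | _, [] => 0
  | x, y :: l => crossZ u x y + wind u y l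

lemma wind_tele {R : ℤ × ℤ → ℤ × ℤ → Prop} (u u' : ℤ × ℤ) (g : ℤ × ℤ → ℤ)
    (hpq : ∀ p q, R p q → crossZ u p q - crossZ u' p q = g q - g p) :
    ∀ (l : List (ℤ × ℤ)) (x : ℤ × ℤ), List.Chain R x l →
      wind u x l - wind u' x l = g ((x :: l).getLast (by simp)) - g x := by
  intro l
  induction l with
  | nil => intro x _; simp [wind]
  | cons y t ih =>
    intro x hc
    simp only [List.Chain, List.isChain_cons_cons] at hc
    have h2 := ih y hc.2
    have h1 := hpq x y hc.1
    simp only [wind]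
    have : (x :: y :: t).getLast (by simp) = (y :: t).getLast (by simp) := by
      rw [List.getLast_cons (by simp)]
    rw [this]; omega

lemma wind_eq_of_ptwise {R : ℤ × ℤ → ℤ × ℤ → Prop} (u u' : ℤ × ℤ)
    (hpq : ∀ p q, R p q → crossZ u p q = crossZ u' p q) :
    ∀ (l : List (ℤ × ℤ)) (x : ℤ × ℤ), List.Chain R x l → wind u x l = wind u' x l := by
  intro l
  induction l with
  | nil => intro x _; simp [wind]
  | cons y t ih =>
    intro x hc
    simp only [List.Chain, List.isChain_cons_cons] at hc
    simp only [wind, hpq x y hc.1, ih y hc.2]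

lemma wind_zero_of_ptwise {R : ℤ × ℤ → ℤ × ℤ → Prop} (u : ℤ × ℤ)
    (hpq : ∀ p q, R p q → crossZ u p q = 0) :
    ∀ (l : List (ℤ × ℤ)) (x : ℤ × ℤ), List.Chain R x l → wind u x l = 0 := by
  intro l
  induction l with
  | nil => intro x _; simp [wind]
  | cons y t ih =>
    intro x hc
    simp only [List.Chain, List.isChain_cons_cons] at hc
    simp only [wind, hpq x y hc.1, ih y hc.2, add_zero]




lemma wind_sum_tele {R : ℤ × ℤ → ℤ × ℤ → Prop} (u : ℤ × ℤ) (g : ℤ × ℤ → ℤ)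
    (hpq : ∀ p q, R p q → crossZ u p q = g q - g p) :
    ∀ (l : List (ℤ × ℤ)) (x : ℤ × ℤ), List.Chain R x l →
      wind u x l = g ((x :: l).getLast (by simp)) - g x := by
  intro l
  induction l with
  | nil => intro x _; simp [wind]
  | cons y t ih =>
    intro x hc
    simp only [List.Chain, List.isChain_cons_cons] at hc
    have h2 := ih y hc.2
    have h1 := hpq x y hc.1
    simp only [wind]
    have : (x :: y :: t).getLast (by simp) = (y :: t).getLast (by simp) := by
      rw [List.getLast_cons (by simp)]
    rw [this]; omega




/-- moving the base point right by one changes nothing unless an edge endpoint sits at u+(1,0). -/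
lemma crossZ_hmove (u p q : ℤ × ℤ)
    (hp : ¬(p.1 = u.1 + 1 ∧ p.2 = u.2)) (hq : ¬(q.1 = u.1 + 1 ∧ q.2 = u.2)) :
    crossZ u p q = crossZ (u.1 + 1, u.2) p q := by
  simp only [crossZ]
  split_ifs <;> omega

/-- vertical move of the base point: telescoping identity. -/
lemma crossZ_vmove (u p q : ℤ × ℤ) (hadj : TriAdj p q)
    (hp : ¬(p.1 = u.1 ∧ p.2 = u.2)) (hq : ¬(q.1 = u.1 ∧ q.2 = u.2))
    (he1 : ¬(p.1 = u.1 ∧ p.2 = u.2 + 1 ∧ q.1 = u.1 + 1 ∧ q.2 = u.2 + 1))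
    (he2 : ¬(q.1 = u.1 ∧ q.2 = u.2 + 1 ∧ p.1 = u.1 + 1 ∧ p.2 = u.2 + 1)) :
    crossZ u p q - crossZ (u.1, u.2 + 1) p q =
      (if q.2 = u.2 + 1 ∧ u.1 < q.1 then (1:ℤ) else 0) -
      (if p.2 = u.2 + 1 ∧ u.1 < p.1 then (1:ℤ) else 0) := by
  rw [triAdj_iff] at hadj
  simp only [crossZ]
  rcases hadj with h|h|h|h|h|h <;> obtain ⟨h1,h2⟩ := h <;> split_ifs <;> omega

/-- far above / below / right: pointwise zero. -/
lemma crossZ_zero_above (u p q : ℤ × ℤ) (hp : p.2 < u.2) (hq : q.2 < u.2) :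
    crossZ u p q = 0 := by
  simp only [crossZ]; split_ifs <;> omega

lemma crossZ_zero_below (u p q : ℤ × ℤ) (hp : u.2 < p.2) (hq : u.2 < q.2) :
    crossZ u p q = 0 := by
  simp only [crossZ]; split_ifs <;> omega

lemma crossZ_zero_right (u p q : ℤ × ℤ) (hp : p.1 ≤ u.1) (hq : q.1 ≤ u.1) :
    crossZ u p q = 0 := by
  simp only [crossZ]; split_ifs <;> omega

/-- far left: telescoping. -/
lemma crossZ_left (u p q : ℤ × ℤ) (hadj : TriAdj p q) (hp : u.1 < p.1) (hq : u.1 < q.1) :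
    crossZ u p q = (if u.2 < q.2 then (1:ℤ) else 0) - (if u.2 < p.2 then (1:ℤ) else 0) := by
  rw [triAdj_iff] at hadj
  simp only [crossZ]
  rcases hadj with h|h|h|h|h|h <;> obtain ⟨h1,h2⟩ := h <;> split_ifs <;> omega


lemma pair_eq {p : ℤ × ℤ} {a b : ℤ} (h1 : p.1 = a) (h2 : p.2 = b) : p = (a, b) :=
  Prod.ext h1 h2

section Winding

variable (σ : Config)

/-- occupied-adjacency relation -/
def aRel (σ : Config) : ℤ × ℤ → ℤ × ℤ → Prop := fun a b => TriAdj a b ∧ a ∈ σ ∧ b ∈ σ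
/-- empty-adjacency relation -/
def cRel (σ : Config) : ℤ × ℤ → ℤ × ℤ → Prop := fun a b => TriAdj a b ∧ a ∉ σ ∧ b ∉ σ

variable {x0 : ℤ × ℤ} {l : List (ℤ × ℤ)}

lemma wind_hmove (hc : List.Chain (aRel σ) x0 l) {u : ℤ × ℤ}
    (hu' : ((u.1 + 1, u.2) : ℤ × ℤ) ∉ σ) :
    wind u x0 l = wind (u.1 + 1, u.2) x0 l := by
  refine wind_eq_of_ptwise _ _ (fun p q hr => ?_) l x0 hc
  refine crossZ_hmove u p q (fun h => ?_) (fun h => ?_)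
  · exact hu' (pair_eq h.1 h.2 ▸ hr.2.1)
  · exact hu' (pair_eq h.1 h.2 ▸ hr.2.2)

lemma wind_vmove (hc : List.Chain (aRel σ) x0 l) (hcl : (x0 :: l).getLast (by simp) = x0)
    {u : ℤ × ℤ} (hu : u ∉ σ)
    (he : ((u.1, u.2 + 1) : ℤ × ℤ) ∉ σ ∨ ((u.1 + 1, u.2 + 1) : ℤ × ℤ) ∉ σ) :
    wind u x0 l = wind (u.1, u.2 + 1) x0 l := by
  have h := wind_tele (R := aRel σ) u (u.1, u.2+1)
    (fun r => if r.2 = u.2 + 1 ∧ u.1 < r.1 then (1:ℤ) else 0)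
    (fun p q hr => ?_) l x0 hc
  · rw [hcl] at h; omega
  · refine crossZ_vmove u p q hr.1 (fun h => ?_) (fun h => ?_) (fun h => ?_) (fun h => ?_)
    · exact hu (Prod.ext h.1 h.2 ▸ hr.2.1)
    · exact hu (Prod.ext h.1 h.2 ▸ hr.2.2)
    · rcases he with he | he
      · exact he (pair_eq h.1 h.2.1 ▸ hr.2.1)
      · exact he (pair_eq h.2.2.1 h.2.2.2 ▸ hr.2.2)
    · rcases he with he | he
      · exact he (pair_eq h.1 h.2.1 ▸ hr.2.2)
      · exact he (pair_eq h.2.2.1 h.2.2.2 ▸ hr.2.1)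

/-- winding number is constant on connected sets of empty vertices. -/
lemma wind_move (hc : List.Chain (aRel σ) x0 l) (hcl : (x0 :: l).getLast (by simp) = x0)
    {u u' : ℤ × ℤ} (hu : u ∉ σ) (hu' : u' ∉ σ) (hadj : TriAdj u u') :
    wind u x0 l = wind u' x0 l := by
  rw [triAdj_iff] at hadj
  rcases hadj with h|h|h|h|h|h
  · have e : u' = ((u.1+1, u.2) : ℤ × ℤ) := pair_eq h.1 h.2
    rw [e]; exact wind_hmove σ hc (e ▸ hu')
  · have e : u = ((u'.1+1, u'.2) : ℤ × ℤ) := pair_eq (by omega) (by omega)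
    rw [e]; exact (wind_hmove σ hc (e ▸ hu)).symm
  · have e : u' = ((u.1, u.2+1) : ℤ × ℤ) := pair_eq h.1 h.2
    rw [e]; exact wind_vmove σ hc hcl hu (Or.inl (e ▸ hu'))
  · have e : u = ((u'.1, u'.2+1) : ℤ × ℤ) := pair_eq (by omega) (by omega)
    rw [e]; exact (wind_vmove σ hc hcl hu' (Or.inl (e ▸ hu))).symm
  · have e : u' = ((u.1+1, u.2+1) : ℤ × ℤ) := pair_eq h.1 h.2
    have h1 := wind_vmove σ hc hcl hu (Or.inr (e ▸ hu'))
    have h2 := wind_hmove σ hc (u := ((u.1, u.2+1) : ℤ × ℤ)) (e ▸ hu')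
    rw [e, h1]; exact h2
  · have e : u = ((u'.1+1, u'.2+1) : ℤ × ℤ) := pair_eq (by omega) (by omega)
    have h1 := wind_vmove σ hc hcl hu' (Or.inr (e ▸ hu))
    have h2 := wind_hmove σ hc (u := ((u'.1, u'.2+1) : ℤ × ℤ)) (e ▸ hu)
    rw [e, h1]; exact h2.symm

lemma wind_const_on_component (hc : List.Chain (aRel σ) x0 l)
    (hcl : (x0 :: l).getLast (by simp) = x0) {b z : ℤ × ℤ}
    (hz : Relation.ReflTransGen (cRel σ) b z) :
    wind z x0 l = wind b x0 l := by
  induction hz with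
  | refl => rfl
  | tail _ h ih => rw [← wind_move σ hc hcl h.2.1 h.2.2 h.1]; exact ih

end Winding


lemma chain_snoc {R : ℤ × ℤ → ℤ × ℤ → Prop} :
    ∀ {l : List (ℤ × ℤ)} {x y : ℤ × ℤ}, List.Chain R x l →
      R ((x :: l).getLast (by simp)) y → List.Chain R x (l ++ [y]) := by
  intro l
  induction l with
  | nil => intro x y _ h2; simpa [List.Chain] using h2
  | cons z t ih =>
    intro x y h h2
    simp only [List.Chain, List.isChain_cons_cons] at h
    show List.Chain R x (z :: (t ++ [y]))
    simp only [List.Chain, List.isChain_cons_cons]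
    exact ⟨h.1, ih h.2 (by simpa [List.getLast_cons] using h2)⟩

section Jordan

variable {σ : Config} {v : ℤ × ℤ}

/-- **Discrete Jordan-type lemma**. -/
lemma jordan (hmax : ∀ w ∈ σ, w.1 < v.1 ∨ (w.1 = v.1 ∧ w.2 ≤ v.2))
    (hv : v ∈ σ) (ha : ((v.1 - 1, v.2) : ℤ × ℤ) ∈ σ) (hc : ((v.1, v.2 - 1) : ℤ × ℤ) ∈ σ)
    (hb : ((v.1 - 1, v.2 - 1) : ℤ × ℤ) ∉ σ) (hhole : HoleFree σ) :
    ¬ Relation.ReflTransGen (aRel (σ.erase v)) (v.1 - 1, v.2) (v.1, v.2 - 1) := by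
  intro hpath
  obtain ⟨l, hchain, hlast⟩ := List.exists_isChain_cons_of_relationReflTransGen hpath
  set L : List (ℤ × ℤ) := (v.1 - 1, v.2) :: (l ++ [v]) with hL
  have herase : ∀ {p q : ℤ × ℤ}, aRel (σ.erase v) p q → aRel σ p q := by
    intro p q h
    exact ⟨h.1, Finset.mem_of_mem_erase h.2.1, Finset.mem_of_mem_erase h.2.2⟩
  have hchain2 : List.Chain (aRel σ) (v.1 - 1, v.2) (l ++ [v]) := by
    refine chain_snoc (hchain.imp (fun _ _ h => herase h)) ?_
    rw [hlast]
    refine ⟨?_, hc, hv⟩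
    rw [triAdj_iff]; simp; try omega
  have hcw : List.Chain (aRel σ) v L := by
    rw [hL]; simp only [List.Chain, List.isChain_cons_cons]
    exact ⟨⟨by rw [triAdj_iff]; simp; try omega, hv, ha⟩, hchain2⟩
  have hclosed : (v :: L).getLast (by simp) = v := by
    rw [hL]
    show (v :: (v.1 - 1, v.2) :: (l ++ [v])).getLast (by simp) = v
    rw [List.getLast_cons (by simp), List.getLast_cons (by simp)]
    exact List.getLast_concat
  have hWb : wind (v.1 - 1, v.2 - 1) v L = 1 := by
    have key : ∀ (t : List (ℤ × ℤ)) (x : ℤ × ℤ), List.Chain (aRel (σ.erase v)) x t →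
        ((x :: t).getLast (by simp)) = ((v.1, v.2 - 1) : ℤ × ℤ) →
        wind (v.1 - 1, v.2 - 1) x (t ++ [v]) = 1 := by
      intro t
      induction t with
      | nil =>
        intro x _ hl
        simp only [List.getLast_singleton] at hl
        subst hl
        show crossZ (v.1 - 1, v.2 - 1) (v.1, v.2 - 1) v + wind (v.1 - 1, v.2 - 1) v [] = 1
        simp only [wind, crossZ]
        norm_num
      | cons y t ih =>
        intro x hchain hlast
        simp only [List.Chain, List.isChain_cons_cons] at hchain
        have hx : x ∈ σ.erase v := hchain.1.2.1
        have hy : y ∈ σ.erase v := hchain.1.2.2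
        have hxv : ¬(x.1 = v.1 ∧ x.2 = v.2) := by
          intro h; exact (Finset.ne_of_mem_erase hx) (Prod.ext h.1 h.2)
        have hyv : ¬(y.1 = v.1 ∧ y.2 = v.2) := by
          intro h; exact (Finset.ne_of_mem_erase hy) (Prod.ext h.1 h.2)
        have hxσ := hmax x (Finset.mem_of_mem_erase hx)
        have hyσ := hmax y (Finset.mem_of_mem_erase hy)
        have hadj := hchain.1.1
        rw [triAdj_iff] at hadj
        have h0 : crossZ (v.1 - 1, v.2 - 1) x y = 0 := by
          simp only [crossZ]
          norm_num
          split_ifs <;> omega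
        show crossZ (v.1 - 1, v.2 - 1) x y + wind (v.1 - 1, v.2 - 1) y (t ++ [v]) = 1
        rw [h0, ih y hchain.2 (by simpa [List.getLast_cons] using hlast), zero_add]
    have step1 : wind (v.1 - 1, v.2 - 1) v L =
        crossZ (v.1 - 1, v.2 - 1) v (v.1 - 1, v.2) +
          wind (v.1 - 1, v.2 - 1) (v.1 - 1, v.2) (l ++ [v]) := rfl
    rw [step1, key l (v.1 - 1, v.2) hchain hlast]
    have h0 : crossZ (v.1 - 1, v.2 - 1) v (v.1 - 1, v.2) = 0 := by
      simp only [crossZ]; norm_num; try omega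
    rw [h0, zero_add]
  have hinf := hhole ((v.1 - 1, v.2 - 1) : ℤ × ℤ) hb
  have hne : σ.Nonempty := ⟨v, hv⟩
  set MX := (σ.image Prod.fst).max' (hne.image _) with hMX
  set mX := (σ.image Prod.fst).min' (hne.image _) with hmX
  set MY := (σ.image Prod.snd).max' (hne.image _) with hMY
  set mY := (σ.image Prod.snd).min' (hne.image _) with hmY
  have hbound : ∀ p ∈ σ, mX ≤ p.1 ∧ p.1 ≤ MX ∧ mY ≤ p.2 ∧ p.2 ≤ MY := by
    intro p hp
    refine ⟨Finset.min'_le _ _ ?_, Finset.le_max' _ _ ?_, Finset.min'_le _ _ ?_,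
      Finset.le_max' _ _ ?_⟩ <;> exact Finset.mem_image_of_mem _ hp
  obtain ⟨z, hz, hzbox⟩ := hinf.exists_notMem_finset (Finset.Icc mX MX ×ˢ Finset.Icc mY MY)
  have hzout : z.1 < mX ∨ MX < z.1 ∨ z.2 < mY ∨ MY < z.2 := by
    by_contra hcon
    push_neg at hcon
    exact hzbox (by simp only [Finset.mem_product, Finset.mem_Icc]; omega)
  have hWz : wind z v L = 0 := by
    rcases hzout with h | h | h | h
    · have ht := wind_sum_tele (R := aRel σ) z
        (fun r => if z.2 < r.2 then (1:ℤ) else 0)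
        (fun p q hr => by
          have hp := (hbound p hr.2.1).1
          have hq := (hbound q hr.2.2).1
          rw [crossZ_left z p q hr.1 (by omega) (by omega)]) L v hcw
      rw [hclosed] at ht
      omega
    · exact wind_zero_of_ptwise (R := aRel σ) z
        (fun p q hr => crossZ_zero_right z p q (by have := (hbound p hr.2.1).2.1; omega)
          (by have := (hbound q hr.2.2).2.1; omega)) L v hcw
    · exact wind_zero_of_ptwise (R := aRel σ) z
        (fun p q hr => crossZ_zero_below z p q (by have := (hbound p hr.2.1).2.2.1; omega)
          (by have := (hbound q hr.2.2).2.2.1; omega)) L v hcw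
    · exact wind_zero_of_ptwise (R := aRel σ) z
        (fun p q hr => crossZ_zero_above z p q (by have := (hbound p hr.2.1).2.2.2; omega)
          (by have := (hbound q hr.2.2).2.2.2; omega)) L v hcw
  have hconst := wind_const_on_component σ hcw hclosed hz
  rw [hWz, hWb] at hconst
  exact absurd hconst (by norm_num)

end Jordan


section Count

variable {σ : Config} {v : ℤ × ℤ}

lemma shift_eq_iff {w d : ℤ × ℤ} : shift w d = v ↔ w = (v.1 - d.1, v.2 - d.2) := by
  simp only [shift, Prod.ext_iff]
  omega

lemma filter_shift_erase (hv : v ∈ σ) {d : ℤ × ℤ} (hvd : shift v d ∉ σ)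
    (hne : ((v.1 - d.1, v.2 - d.2) : ℤ × ℤ) ≠ v) :
    ((σ.filter (fun w => shift w d ∈ σ)).card : ℤ) =
      ((σ.erase v).filter (fun w => shift w d ∈ σ.erase v)).card +
      (if ((v.1 - d.1, v.2 - d.2) : ℤ × ℤ) ∈ σ then 1 else 0) := by
  set u : ℤ × ℤ := (v.1 - d.1, v.2 - d.2) with hu
  have hud : shift u d = v := by simp [shift, hu]
  by_cases huσ : u ∈ σ
  · rw [if_pos huσ]
    have hset : σ.filter (fun w => shift w d ∈ σ) =
        insert u ((σ.erase v).filter (fun w => shift w d ∈ σ.erase v)) := by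
      ext w
      simp only [Finset.mem_filter, Finset.mem_insert, Finset.mem_erase]
      constructor
      · rintro ⟨hw, hwd⟩
        have hwv : w ≠ v := by rintro rfl; exact hvd hwd
        by_cases hwdv : shift w d = v
        · exact Or.inl (shift_eq_iff.mp hwdv)
        · exact Or.inr ⟨⟨hwv, hw⟩, hwdv, hwd⟩
      · rintro (rfl | ⟨⟨_, hw⟩, _, hwd⟩)
        · exact ⟨huσ, hud ▸ hv⟩
        · exact ⟨hw, hwd⟩
    rw [hset, Finset.card_insert_of_notMem (by
      simp only [Finset.mem_filter, Finset.mem_erase, hud]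
      rintro ⟨-, h, -⟩; exact h rfl)]
    push_cast; ring
  · rw [if_neg huσ]
    have hset : σ.filter (fun w => shift w d ∈ σ) =
        (σ.erase v).filter (fun w => shift w d ∈ σ.erase v) := by
      ext w
      simp only [Finset.mem_filter, Finset.mem_erase]
      constructor
      · rintro ⟨hw, hwd⟩
        have hwv : w ≠ v := by rintro rfl; exact hvd hwd
        have hwdv : shift w d ≠ v := by
          intro h
          have hwu : w = u := by rw [hu]; exact shift_eq_iff.mp h
          exact huσ (hwu ▸ hw)
        exact ⟨⟨hwv, hw⟩, hwdv, hwd⟩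
      · rintro ⟨⟨_, hw⟩, _, hwd⟩; exact ⟨hw, hwd⟩
    rw [hset]; push_cast; ring

lemma filter_tri_erase (hv : v ∈ σ) {d : ℤ × ℤ}
    (hd : d = (1,0) ∨ d = (0,1))
    (hvd : shift v d ∉ σ) (hv11 : shift v (1,1) ∉ σ)
    (hvd' : shift v (d.2, d.1) ∉ σ) :
    ((σ.filter (fun w => shift w d ∈ σ ∧ shift w (1,1) ∈ σ)).card : ℤ) =
      ((σ.erase v).filter (fun w => shift w d ∈ σ.erase v ∧ shift w (1,1) ∈ σ.erase v)).card +
      (if ((v.1 - 1, v.2 - 1) : ℤ × ℤ) ∈ σ ∧ ((v.1 - 1 + d.1, v.2 - 1 + d.2) : ℤ × ℤ) ∈ σ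
        then 1 else 0) := by
  set u : ℤ × ℤ := (v.1 - 1, v.2 - 1) with hu
  have hud : shift u (1,1) = v := by simp [shift, hu]
  have hud2 : shift u d = ((v.1 - 1 + d.1, v.2 - 1 + d.2) : ℤ × ℤ) := by
    simp [shift, hu]
  -- the key membership fact
  have hmem : ∀ w, (w ∈ σ ∧ shift w d ∈ σ ∧ shift w (1,1) ∈ σ) ↔
      ((w = u ∧ u ∈ σ ∧ ((v.1 - 1 + d.1, v.2 - 1 + d.2) : ℤ × ℤ) ∈ σ) ∨
       ((w ≠ v ∧ w ∈ σ) ∧ (shift w d ≠ v ∧ shift w d ∈ σ) ∧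
        (shift w (1,1) ≠ v ∧ shift w (1,1) ∈ σ))) := by
    intro w
    constructor
    · rintro ⟨hw, h1, h2⟩
      have hwv : w ≠ v := by rintro rfl; exact hvd h1
      by_cases h11v : shift w (1,1) = v
      · have hwu : w = u := by rw [shift_eq_iff] at h11v; exact h11v
        subst hwu
        exact Or.inl ⟨rfl, hw, hud2 ▸ h1⟩
      · have hdv : shift w d ≠ v := by
          intro h
          rw [shift_eq_iff] at h
          subst h
          apply hvd'
          have : shift ((v.1 - d.1, v.2 - d.2) : ℤ × ℤ) (1,1) =
              ((v.1 + 1 - d.1, v.2 + 1 - d.2) : ℤ × ℤ) := by simp [shift, Prod.ext_iff]; omega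
          rw [this] at h2
          rcases hd with rfl | rfl
          · simpa [shift] using h2
          · simpa [shift] using h2
        exact Or.inr ⟨⟨hwv, hw⟩, ⟨hdv, h1⟩, ⟨h11v, h2⟩⟩
    · rintro (⟨rfl, h1, h2⟩ | ⟨⟨_, hw⟩, ⟨_, h1⟩, ⟨_, h2⟩⟩)
      · exact ⟨h1, hud2 ▸ h2, hud ▸ hv⟩
      · exact ⟨hw, h1, h2⟩
  by_cases hcond : u ∈ σ ∧ ((v.1 - 1 + d.1, v.2 - 1 + d.2) : ℤ × ℤ) ∈ σ
  · rw [if_pos hcond]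
    have hset : σ.filter (fun w => shift w d ∈ σ ∧ shift w (1,1) ∈ σ) =
        insert u ((σ.erase v).filter
          (fun w => shift w d ∈ σ.erase v ∧ shift w (1,1) ∈ σ.erase v)) := by
      ext w
      simp only [Finset.mem_filter, Finset.mem_insert, Finset.mem_erase]
      rw [show (w ∈ σ ∧ shift w d ∈ σ ∧ shift w (1,1) ∈ σ) ↔ _ from hmem w]
      constructor
      · rintro (⟨rfl, _, _⟩ | h)
        · exact Or.inl rfl
        · exact Or.inr ⟨⟨h.1.1, h.1.2⟩, ⟨h.2.1.1, h.2.1.2⟩, ⟨h.2.2.1, h.2.2.2⟩⟩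
      · rintro (rfl | ⟨⟨h1, h2⟩, ⟨h3, h4⟩, h5, h6⟩)
        · exact Or.inl ⟨rfl, hcond⟩
        · exact Or.inr ⟨⟨h1, h2⟩, ⟨h3, h4⟩, ⟨h5, h6⟩⟩
    rw [hset, Finset.card_insert_of_notMem (by
      simp only [Finset.mem_filter, Finset.mem_erase, hud]
      rintro ⟨-, -, h, -⟩; exact h rfl)]
    push_cast; ring
  · rw [if_neg hcond]
    have hset : σ.filter (fun w => shift w d ∈ σ ∧ shift w (1,1) ∈ σ) =
        (σ.erase v).filter (fun w => shift w d ∈ σ.erase v ∧ shift w (1,1) ∈ σ.erase v) := by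
      ext w
      simp only [Finset.mem_filter, Finset.mem_erase]
      rw [show (w ∈ σ ∧ shift w d ∈ σ ∧ shift w (1,1) ∈ σ) ↔ _ from hmem w]
      constructor
      · rintro (⟨rfl, h1, h2⟩ | h)
        · exact absurd ⟨h1, h2⟩ hcond
        · exact ⟨⟨h.1.1, h.1.2⟩, ⟨h.2.1.1, h.2.1.2⟩, ⟨h.2.2.1, h.2.2.2⟩⟩
      · rintro ⟨⟨h1, h2⟩, ⟨h3, h4⟩, h5, h6⟩
        exact Or.inr ⟨⟨h1, h2⟩, ⟨h3, h4⟩, ⟨h5, h6⟩⟩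
    rw [hset]; push_cast; ring

variable (hmax : ∀ w ∈ σ, w.1 < v.1 ∨ (w.1 = v.1 ∧ w.2 ≤ v.2)) (hv : v ∈ σ)
include hmax hv

lemma not_mem_right : ∀ w : ℤ × ℤ, v.1 < w.1 ∨ (v.1 = w.1 ∧ v.2 < w.2) → w ∉ σ := by
  intro w hw hwσ
  have := hmax w hwσ
  omega

lemma edges_erase :
    (edges σ : ℤ) = edges (σ.erase v) +
      ((if ((v.1 - 1, v.2) : ℤ × ℤ) ∈ σ then 1 else 0) +
      (if ((v.1, v.2 - 1) : ℤ × ℤ) ∈ σ then 1 else 0) +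
      (if ((v.1 - 1, v.2 - 1) : ℤ × ℤ) ∈ σ then 1 else 0)) := by
  have h1 := filter_shift_erase (d := (1,0)) hv
    (not_mem_right hmax hv _ (by simp [shift])) (by simp [Prod.ext_iff])
  have h2 := filter_shift_erase (d := (0,1)) hv
    (not_mem_right hmax hv _ (by simp [shift])) (by simp [Prod.ext_iff])
  have h3 := filter_shift_erase (d := (1,1)) hv
    (not_mem_right hmax hv _ (by simp [shift])) (by simp [Prod.ext_iff])
  simp only [edges]
  push_cast
  simp only [show ((1:ℤ),(0:ℤ)).1 = 1 from rfl] at h1 h2 h3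
  norm_num at h1 h2 h3 ⊢
  rw [h1, h2, h3]
  ring

lemma triangles_erase :
    (triangles σ : ℤ) = triangles (σ.erase v) +
      ((if ((v.1 - 1, v.2 - 1) : ℤ × ℤ) ∈ σ ∧ ((v.1, v.2 - 1) : ℤ × ℤ) ∈ σ then 1 else 0) +
      (if ((v.1 - 1, v.2 - 1) : ℤ × ℤ) ∈ σ ∧ ((v.1 - 1, v.2) : ℤ × ℤ) ∈ σ then 1 else 0)) := by
  have h1 := filter_tri_erase (d := (1,0)) hv (Or.inl rfl)
    (not_mem_right hmax hv _ (by simp [shift]))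
    (not_mem_right hmax hv _ (by simp [shift]))
    (not_mem_right hmax hv _ (by simp [shift]))
  have h2 := filter_tri_erase (d := (0,1)) hv (Or.inr rfl)
    (not_mem_right hmax hv _ (by simp [shift]))
    (not_mem_right hmax hv _ (by simp [shift]))
    (not_mem_right hmax hv _ (by simp [shift]))
  simp only [triangles]
  push_cast
  norm_num at h1 h2 ⊢
  rw [h1, h2]
  ring

end Count


lemma triAdj_irrefl (x : ℤ × ℤ) : ¬ TriAdj x x := by
  rw [triAdj_iff]; omega

lemma aRel_symm {τ : Config} : Symmetric (aRel τ) :=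
  fun _ _ h => ⟨triAdj_symm h.1, h.2.2, h.2.1⟩

lemma rtg_symm {τ : Config} {x y : ℤ × ℤ} (h : Relation.ReflTransGen (aRel τ) x y) :
    Relation.ReflTransGen (aRel τ) y x :=
  haveI : Std.Symm (aRel τ) := ⟨fun _ _ h => aRel_symm h⟩
  Std.Symm.symm (r := Relation.ReflTransGen (aRel τ)) _ _ h

lemma rtg_exists_last {r : ℤ × ℤ → ℤ × ℤ → Prop} {x y : ℤ × ℤ}
    (h : Relation.ReflTransGen r x y) (hne : x ≠ y) : ∃ s, r s y := by
  induction h with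
  | refl => exact absurd rfl hne
  | tail _ hbc => exact ⟨_, hbc⟩

section LexMax

variable {σ : Config} {v : ℤ × ℤ}

lemma nbr_of_lexmax (hmax : ∀ w ∈ σ, w.1 < v.1 ∨ (w.1 = v.1 ∧ w.2 ≤ v.2))
    {s : ℤ × ℤ} (hs : aRel σ s v) :
    (s.1 = v.1 - 1 ∧ s.2 = v.2) ∨ (s.1 = v.1 ∧ s.2 = v.2 - 1) ∨
      (s.1 = v.1 - 1 ∧ s.2 = v.2 - 1) := by
  have h1 := hmax s hs.2.1
  have h2 := hs.1
  rw [triAdj_iff] at h2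
  omega

/-- rerouting paths through the lex-max vertex -/
lemma reroute (hv : v ∈ σ)
    (hS : ∀ s t : ℤ × ℤ, aRel σ s v → aRel σ t v →
      Relation.ReflTransGen (aRel (σ.erase v)) s t)
    {x y : ℤ × ℤ} (hx : x ∈ σ.erase v) (hy : y ∈ σ.erase v)
    (hpath : Relation.ReflTransGen (aRel σ) x y) :
    Relation.ReflTransGen (aRel (σ.erase v)) x y := by
  have hxv : x ≠ v := Finset.ne_of_mem_erase hx
  have main : ∀ z, Relation.ReflTransGen (aRel σ) x z →
      (z = v → ∃ s, aRel σ s v ∧ Relation.ReflTransGen (aRel (σ.erase v)) x s) ∧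
      (z ≠ v → Relation.ReflTransGen (aRel (σ.erase v)) x z) := by
    intro z hz
    induction hz with
    | refl => exact ⟨fun h => absurd h hxv, fun _ => Relation.ReflTransGen.refl⟩
    | @tail b c hxb hbc ih =>
      constructor
      · intro hcv
        subst hcv
        have hbv : b ≠ c := fun h => triAdj_irrefl c (h ▸ hbc.1)
        exact ⟨b, hbc, ih.2 hbv⟩
      · intro hcv
        by_cases hbv : b = v
        · subst hbv
          obtain ⟨s, hsv, hxs⟩ := ih.1 rfl
          exact hxs.trans (hS s c hsv (aRel_symm hbc))
        · exact (ih.2 hbv).tail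
            ⟨hbc.1, Finset.mem_erase_of_ne_of_mem hbv hbc.2.1,
              Finset.mem_erase_of_ne_of_mem hcv hbc.2.2⟩
  exact (main y hpath).2 (Finset.ne_of_mem_erase hy)

end LexMax

lemma comp_mono {A σ : Config} (hsub : A ⊆ σ) (w : ℤ × ℤ) :
    compComponent σ w ⊆ compComponent A w := by
  intro z hz
  exact Relation.ReflTransGen.mono (r := cRel σ) (p := cRel A)
    (fun p q h => ⟨h.1, fun hp => h.2.1 (hsub hp), fun hq => h.2.2 (hsub hq)⟩) _ _ hz

lemma comp_infinite_of_ray (τ : Config) {w u : ℤ × ℤ}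
    (hreach : Relation.ReflTransGen (cRel τ) w u)
    (hray : ∀ k : ℕ, ((u.1 + k, u.2) : ℤ × ℤ) ∉ τ) :
    (compComponent τ w).Infinite := by
  have hmem : ∀ k : ℕ, ((u.1 + k, u.2) : ℤ × ℤ) ∈ compComponent τ w := by
    intro k
    induction k with
    | zero => simp only [compComponent, Set.mem_setOf_eq, Nat.cast_zero, add_zero]; exact hreach
    | succ k ih =>
      refine Relation.ReflTransGen.tail ih ⟨?_, hray k, by
        have := hray (k+1); push_cast at this ⊢; convert this using 2 <;> push_cast <;> ring⟩
      rw [triAdj_iff]; push_cast; omega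
  refine Set.infinite_of_injective_forall_mem (f := fun k : ℕ => ((u.1 + k, u.2) : ℤ × ℤ))
    (fun k k' h => ?_) hmem
  simp only [Prod.ext_iff] at h
  omega

lemma rtg_in_filter {τ : Config} {a x : ℤ × ℤ}
    [DecidablePred (fun z => Relation.ReflTransGen (aRel τ) z a)]
    (h : Relation.ReflTransGen (aRel τ) x a) :
    Relation.ReflTransGen
      (aRel (τ.filter (fun z => Relation.ReflTransGen (aRel τ) z a))) x a := by
  induction h using Relation.ReflTransGen.head_induction_on with
  | refl => exact Relation.ReflTransGen.refl
  | head h1 h2 ih =>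
    refine Relation.ReflTransGen.head ⟨h1.1, ?_, ?_⟩ ih
    · exact Finset.mem_filter.mpr ⟨h1.2.1, Relation.ReflTransGen.head h1 h2⟩
    · exact Finset.mem_filter.mpr ⟨h1.2.2, h2⟩

section Split

variable {τ A C : Config}
variable (hpart : ∀ x, x ∈ τ ↔ (x ∈ A ∨ x ∈ C))
variable (hdisj : ∀ x, ¬(x ∈ A ∧ x ∈ C))
variable (hclosed : ∀ x y, x ∈ τ → y ∈ τ → TriAdj x y → (x ∈ A ↔ y ∈ A))

include hpart hdisj

lemma card_split : (τ.card : ℤ) = A.card + C.card := by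
  have : τ = A ∪ C := Finset.ext fun x => by
    rw [hpart x, Finset.mem_union]
  rw [this, Finset.card_union_of_disjoint (Finset.disjoint_left.mpr
    (fun {x} hx hx' => hdisj x ⟨hx, hx'⟩))]
  push_cast; ring

include hclosed

lemma filter_split {d : ℤ × ℤ} (hd : d ∈ triNbrs) :
    ((τ.filter (fun w => shift w d ∈ τ)).card : ℤ) =
      (A.filter (fun w => shift w d ∈ A)).card + (C.filter (fun w => shift w d ∈ C)).card := by
  have hsame : ∀ w, w ∈ τ → shift w d ∈ τ → (w ∈ A ↔ shift w d ∈ A) :=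
    fun w hw hwd => hclosed w (shift w d) hw hwd (triAdj_shift w hd)
  have hset : τ.filter (fun w => shift w d ∈ τ) =
      (A.filter (fun w => shift w d ∈ A)) ∪ (C.filter (fun w => shift w d ∈ C)) := by
    ext w
    simp only [Finset.mem_filter, Finset.mem_union]
    constructor
    · rintro ⟨hw, hwd⟩
      rcases (hpart w).mp hw with hA | hC
      · exact Or.inl ⟨hA, (hsame w hw hwd).mp hA⟩
      · refine Or.inr ⟨hC, ?_⟩
        have h1 : w ∉ A := fun h => hdisj w ⟨h, hC⟩
        have h2 : shift w d ∉ A := fun h => h1 ((hsame w hw hwd).mpr h)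
        rcases (hpart (shift w d)).mp hwd with h | h
        · exact absurd h h2
        · exact h
    · rintro (⟨h1, h2⟩ | ⟨h1, h2⟩)
      · exact ⟨(hpart w).mpr (Or.inl h1), (hpart _).mpr (Or.inl h2)⟩
      · exact ⟨(hpart w).mpr (Or.inr h1), (hpart _).mpr (Or.inr h2)⟩
  rw [hset, Finset.card_union_of_disjoint (Finset.disjoint_left.mpr ?_)]
  · push_cast; ring
  · intro x hx hx'
    exact hdisj x ⟨(Finset.mem_filter.mp hx).1, (Finset.mem_filter.mp hx').1⟩

lemma filter2_split {d : ℤ × ℤ} (hd : d ∈ triNbrs) :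
    ((τ.filter (fun w => shift w d ∈ τ ∧ shift w (1,1) ∈ τ)).card : ℤ) =
      (A.filter (fun w => shift w d ∈ A ∧ shift w (1,1) ∈ A)).card +
      (C.filter (fun w => shift w d ∈ C ∧ shift w (1,1) ∈ C)).card := by
  have h11 : ((1,1) : ℤ × ℤ) ∈ triNbrs := by simp [triNbrs]
  have hsame : ∀ w (e : ℤ × ℤ), e ∈ triNbrs → w ∈ τ → shift w e ∈ τ → (w ∈ A ↔ shift w e ∈ A) :=
    fun w e he hw hwd => hclosed w (shift w e) hw hwd (triAdj_shift w he)
  have hset : τ.filter (fun w => shift w d ∈ τ ∧ shift w (1,1) ∈ τ) =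
      (A.filter (fun w => shift w d ∈ A ∧ shift w (1,1) ∈ A)) ∪
      (C.filter (fun w => shift w d ∈ C ∧ shift w (1,1) ∈ C)) := by
    ext w
    simp only [Finset.mem_filter, Finset.mem_union]
    constructor
    · rintro ⟨hw, hwd, hw11⟩
      rcases (hpart w).mp hw with hA | hC
      · exact Or.inl ⟨hA, (hsame w d hd hw hwd).mp hA, (hsame w (1,1) h11 hw hw11).mp hA⟩
      · have h1 : w ∉ A := fun h => hdisj w ⟨h, hC⟩
        refine Or.inr ⟨hC, ?_, ?_⟩
        · have h2 : shift w d ∉ A := fun h => h1 ((hsame w d hd hw hwd).mpr h)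
          rcases (hpart (shift w d)).mp hwd with h | h
          · exact absurd h h2
          · exact h
        · have h2 : shift w (1,1) ∉ A := fun h => h1 ((hsame w (1,1) h11 hw hw11).mpr h)
          rcases (hpart (shift w (1,1))).mp hw11 with h | h
          · exact absurd h h2
          · exact h
    · rintro (⟨h1, h2, h3⟩ | ⟨h1, h2, h3⟩)
      · exact ⟨(hpart w).mpr (Or.inl h1), (hpart _).mpr (Or.inl h2), (hpart _).mpr (Or.inl h3)⟩
      · exact ⟨(hpart w).mpr (Or.inr h1), (hpart _).mpr (Or.inr h2), (hpart _).mpr (Or.inr h3)⟩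
  rw [hset, Finset.card_union_of_disjoint (Finset.disjoint_left.mpr ?_)]
  · push_cast; ring
  · intro x hx hx'
    exact hdisj x ⟨(Finset.mem_filter.mp hx).1, (Finset.mem_filter.mp hx').1⟩

lemma edges_split : (edges τ : ℤ) = edges A + edges C := by
  have h1 := filter_split hpart hdisj hclosed (d := (1,0)) (by simp [triNbrs])
  have h2 := filter_split hpart hdisj hclosed (d := (0,1)) (by simp [triNbrs])
  have h3 := filter_split hpart hdisj hclosed (d := (1,1)) (by simp [triNbrs])
  simp only [edges]; push_cast
  rw [h1, h2, h3]; ring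

lemma triangles_split : (triangles τ : ℤ) = triangles A + triangles C := by
  have h1 := filter2_split hpart hdisj hclosed (d := (1,0)) (by simp [triNbrs])
  have h2 := filter2_split hpart hdisj hclosed (d := (0,1)) (by simp [triNbrs])
  simp only [triangles]; push_cast
  rw [h1, h2]; ring

end Split


lemma exists_lexmax (σ : Config) (hne : σ.Nonempty) :
    ∃ v ∈ σ, ∀ w ∈ σ, w.1 < v.1 ∨ (w.1 = v.1 ∧ w.2 ≤ v.2) := by
  classical
  set m1 := (σ.image Prod.fst).max' (hne.image _) with hm1
  have hvs : (σ.filter (fun w => w.1 = m1)).Nonempty := by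
    have := (σ.image Prod.fst).max'_mem (hne.image _)
    rw [Finset.mem_image] at this
    obtain ⟨w, hw, hw1⟩ := this
    exact ⟨w, Finset.mem_filter.mpr ⟨hw, hw1⟩⟩
  set vs := σ.filter (fun w => w.1 = m1) with hvsdef
  set m2 := (vs.image Prod.snd).max' (hvs.image _) with hm2
  have hvmem : ((m1, m2) : ℤ × ℤ) ∈ σ := by
    have := (vs.image Prod.snd).max'_mem (hvs.image _)
    rw [Finset.mem_image] at this
    obtain ⟨w, hw, hw2⟩ := this
    have hw' := Finset.mem_filter.mp hw
    have : w = ((m1, m2) : ℤ × ℤ) := Prod.ext hw'.2 hw2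
    exact this ▸ hw'.1
  refine ⟨(m1, m2), hvmem, fun w hw => ?_⟩
  have h1 : w.1 ≤ m1 := Finset.le_max' _ _ (Finset.mem_image_of_mem _ hw)
  by_cases h : w.1 = m1
  · exact Or.inr ⟨h, Finset.le_max' _ _
      (Finset.mem_image_of_mem _ (Finset.mem_filter.mpr ⟨hw, h⟩))⟩
  · exact Or.inl (by simp only []; omega)


theorem euler_conn : ∀ (n : ℕ) (σ : Config), σ.card = n → HoleFree σ → ConnectedConfig σ →
    (σ.card : ℤ) - edges σ + triangles σ = 1 := by
  intro n
  induction n using Nat.strong_induction_on with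
  | _ n ih =>
  intro σ hcard hhole hconn
  classical
  obtain ⟨hne, hpath⟩ := hconn
  obtain ⟨v, hv, hmax⟩ := exists_lexmax σ hne
  have hn1 : 1 ≤ n := by
    rw [← hcard]
    exact Finset.card_pos.mpr ⟨v, hv⟩
  have hcard' : (σ.erase v).card = n - 1 := by
    rw [Finset.card_erase_of_mem hv, hcard]
  have hcardZ : (σ.card : ℤ) = ((σ.erase v).card : ℤ) + 1 := by
    rw [hcard, hcard']; push_cast; omega
  have hvnot : v ∉ σ.erase v := Finset.notMem_erase v σ
  have hright : ∀ k : ℕ, ((v.1 + 1 + k, v.2) : ℤ × ℤ) ∉ σ := by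
    intro k
    exact not_mem_right hmax hv _ (by left; push_cast; omega)
  have hright0 : ((v.1 + 1, v.2) : ℤ × ℤ) ∉ σ := by
    have := hright 0; simpa using this
  have hadjvr : TriAdj v (v.1 + 1, v.2) := by rw [triAdj_iff]; simp
  -- the three candidate neighbours
  have hnbr : ∀ s, aRel σ s v →
      s = ((v.1 - 1, v.2) : ℤ × ℤ) ∨ s = ((v.1, v.2 - 1) : ℤ × ℤ) ∨
        s = ((v.1 - 1, v.2 - 1) : ℤ × ℤ) := by
    intro s hs
    rcases nbr_of_lexmax hmax hs with h | h | h
    exacts [Or.inl (Prod.ext h.1 h.2), Or.inr (Or.inl (Prod.ext h.1 h.2)),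
      Or.inr (Or.inr (Prod.ext h.1 h.2))]
  have hsne : ∀ {s}, aRel σ s v → s ≠ v := by
    intro s hs h
    exact triAdj_irrefl v (h ▸ hs.1)
  -- hole-freeness of σ \ {v}
  have hhole' : HoleFree (σ.erase v) := by
    intro w hw
    by_cases hwv : w = v
    · have hreach : Relation.ReflTransGen (cRel (σ.erase v)) v ((v.1 + 1, v.2) : ℤ × ℤ) :=
        Relation.ReflTransGen.single
          ⟨hadjvr, hvnot, fun h => hright0 (Finset.mem_of_mem_erase h)⟩
      refine comp_infinite_of_ray (σ.erase v) (w := w) (u := ((v.1 + 1, v.2) : ℤ × ℤ))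
        (by rw [hwv]; exact hreach)
        (fun k => fun h => hright k (Finset.mem_of_mem_erase h))
    · have hwσ : w ∉ σ := fun h => hw (Finset.mem_erase_of_ne_of_mem hwv h)
      exact (hhole w hwσ).mono (comp_mono (Finset.erase_subset v σ) w)
  -- the good case: all occupied neighbours of v are mutually connected in σ \ {v}
  have goodstep : (∀ s t : ℤ × ℤ, aRel σ s v → aRel σ t v →
        Relation.ReflTransGen (aRel (σ.erase v)) s t) →
      (∃ s, aRel σ s v) →
      ((σ.erase v).card : ℤ) - edges (σ.erase v) + triangles (σ.erase v) = 1 := by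
    rintro hS ⟨s0, hs0⟩
    refine ih (n - 1) (by omega) (σ.erase v) hcard' hhole' ⟨⟨s0,
      Finset.mem_erase_of_ne_of_mem (hsne hs0) hs0.2.1⟩, fun x hx y hy => ?_⟩
    exact reroute hv hS hx hy
      (hpath x (Finset.mem_of_mem_erase hx) y (Finset.mem_of_mem_erase hy))
  by_cases hb : ((v.1 - 1, v.2 - 1) : ℤ × ℤ) ∈ σ
  · -- good: every neighbour connects through b
    have hpbv : ((v.1 - 1, v.2 - 1) : ℤ × ℤ) ≠ v := by simp [Prod.ext_iff]; try omega
    have hpb' : ((v.1 - 1, v.2 - 1) : ℤ × ℤ) ∈ σ.erase v :=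
      Finset.mem_erase_of_ne_of_mem hpbv hb
    have toB : ∀ s, aRel σ s v →
        Relation.ReflTransGen (aRel (σ.erase v)) s ((v.1 - 1, v.2 - 1) : ℤ × ℤ) := by
      intro s hs
      rcases hnbr s hs with rfl | rfl | rfl
      · exact Relation.ReflTransGen.single
          ⟨by rw [triAdj_iff]; simp; try omega,
           Finset.mem_erase_of_ne_of_mem (hsne hs) hs.2.1, hpb'⟩
      · exact Relation.ReflTransGen.single
          ⟨by rw [triAdj_iff]; simp; try omega,
           Finset.mem_erase_of_ne_of_mem (hsne hs) hs.2.1, hpb'⟩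
      · exact Relation.ReflTransGen.refl
    have hgood := goodstep (fun s t hs ht => (toB s hs).trans (rtg_symm (toB t ht)))
      ⟨_, ⟨by rw [triAdj_iff]; simp; try omega, hb, hv⟩⟩
    have he := edges_erase hmax hv
    have ht := triangles_erase hmax hv
    rw [if_pos hb] at he
    by_cases ha : ((v.1 - 1, v.2) : ℤ × ℤ) ∈ σ <;>
      by_cases hc : ((v.1, v.2 - 1) : ℤ × ℤ) ∈ σ <;>
      simp only [ha, hc, hb, if_true, if_false, true_and, and_true, if_pos, if_neg,
        not_false_iff, and_false, false_and] at he ht <;>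
      omega
  · by_cases ha : ((v.1 - 1, v.2) : ℤ × ℤ) ∈ σ <;>
      by_cases hc : ((v.1, v.2 - 1) : ℤ × ℤ) ∈ σ
    · -- the bad case : split into two components
      have hjordan := jordan hmax hv ha hc hb hhole
      -- partition of σ \ {v}
      have hpart2 : ∀ x ∈ σ.erase v,
          Relation.ReflTransGen (aRel (σ.erase v)) x ((v.1 - 1, v.2) : ℤ × ℤ) ∨
          Relation.ReflTransGen (aRel (σ.erase v)) x ((v.1, v.2 - 1) : ℤ × ℤ) := by
        intro x hx
        have hxv : x ≠ v := Finset.ne_of_mem_erase hx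
        have main : ∀ z, Relation.ReflTransGen (aRel σ) x z →
            ((z ≠ v → (Relation.ReflTransGen (aRel (σ.erase v)) x z ∨
              (Relation.ReflTransGen (aRel (σ.erase v)) x ((v.1 - 1, v.2) : ℤ × ℤ) ∨
               Relation.ReflTransGen (aRel (σ.erase v)) x ((v.1, v.2 - 1) : ℤ × ℤ)))) ∧
             (z = v → (Relation.ReflTransGen (aRel (σ.erase v)) x ((v.1 - 1, v.2) : ℤ × ℤ) ∨
               Relation.ReflTransGen (aRel (σ.erase v)) x ((v.1, v.2 - 1) : ℤ × ℤ)))) := by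
          intro z hz
          induction hz with
          | refl =>
            exact ⟨fun _ => Or.inl Relation.ReflTransGen.refl, fun h => absurd h hxv⟩
          | @tail p c hxp hpc ihz =>
            constructor
            · intro hcv
              by_cases hpv : p = v
              · exact Or.inr (ihz.2 hpv)
              · rcases ihz.1 hpv with hxp' | hdone
                · exact Or.inl (hxp'.tail ⟨hpc.1,
                    Finset.mem_erase_of_ne_of_mem hpv hpc.2.1,
                    Finset.mem_erase_of_ne_of_mem hcv hpc.2.2⟩)
                · exact Or.inr hdone
            · intro hcv
              have hpc' : aRel σ p v := hcv ▸ hpc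
              have hpv : p ≠ v := hsne hpc'
              rcases ihz.1 hpv with hxp' | hdone
              · rcases hnbr p hpc' with rfl | rfl | rfl
                · exact Or.inl hxp'
                · exact Or.inr hxp'
                · exact absurd hpc'.2.1 hb
              · exact hdone
        exact (main v (hpath x (Finset.mem_of_mem_erase hx) v hv)).2 rfl
      -- the generic component piece
      have hkey : ∀ p q : ℤ × ℤ, p ∈ σ → q ∈ σ → p ≠ v → q ≠ v →
          TriAdj p v → TriAdj q v →
          ¬ Relation.ReflTransGen (aRel (σ.erase v)) p q →
          (∀ x ∈ σ.erase v, Relation.ReflTransGen (aRel (σ.erase v)) x p ∨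
            Relation.ReflTransGen (aRel (σ.erase v)) x q) →
          (((σ.erase v).filter
              (fun x => Relation.ReflTransGen (aRel (σ.erase v)) x p)).card : ℤ) -
            edges ((σ.erase v).filter
              (fun x => Relation.ReflTransGen (aRel (σ.erase v)) x p)) +
            triangles ((σ.erase v).filter
              (fun x => Relation.ReflTransGen (aRel (σ.erase v)) x p)) = 1 := by
        intro p q hpσ hqσ hpv hqv hadjp hadjq hnpq hpart
        set X := (σ.erase v).filter
          (fun x => Relation.ReflTransGen (aRel (σ.erase v)) x p) with hX
        have hXsub : X ⊆ σ.erase v := Finset.filter_subset _ _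
        have hXsubσ : X ⊆ σ := hXsub.trans (Finset.erase_subset v σ)
        have hpX : p ∈ X := Finset.mem_filter.mpr
          ⟨Finset.mem_erase_of_ne_of_mem hpv hpσ, Relation.ReflTransGen.refl⟩
        have hvX : v ∉ X := fun h => hvnot (hXsub h)
        have hqnX : ∀ x, x ∈ σ.erase v →
            Relation.ReflTransGen (aRel (σ.erase v)) x q → x ∉ X := by
          intro x hx hxq hxX
          exact hnpq ((rtg_symm (Finset.mem_filter.mp hxX).2).trans hxq)
        -- connectivity of X
        have hconnX : ConnectedConfig X := by
          refine ⟨⟨p, hpX⟩, fun x hx y hy => ?_⟩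
          have hx' := Finset.mem_filter.mp hx
          have hy' := Finset.mem_filter.mp hy
          exact (rtg_in_filter hx'.2).trans (rtg_symm (rtg_in_filter hy'.2))
        -- hole-freeness of X
        have hholeX : HoleFree X := by
          intro w hw
          by_cases hw1 : w ∈ σ.erase v
          · have hwq : Relation.ReflTransGen (aRel (σ.erase v)) w q := by
              rcases hpart w hw1 with h | h
              · have hwX : w ∈ X := Finset.mem_filter.mpr ⟨hw1, h⟩
                exact absurd hwX hw
              · exact h
            have hmap : Relation.ReflTransGen (cRel X) w q := by
              refine Relation.ReflTransGen.mono (p := cRel X) (fun x y hxy => ?_) _ _ (rtg_in_filter hwq)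
              obtain ⟨hadj, hxm, hym⟩ := hxy
              have hxm' := Finset.mem_filter.mp hxm
              have hym' := Finset.mem_filter.mp hym
              exact ⟨hadj, hqnX x hxm'.1 hxm'.2, hqnX y hym'.1 hym'.2⟩
            have hqX : q ∉ X := hqnX q
              (Finset.mem_erase_of_ne_of_mem hqv hqσ) Relation.ReflTransGen.refl
            refine comp_infinite_of_ray X (u := ((v.1 + 1, v.2) : ℤ × ℤ))
              ((hmap.tail ⟨hadjq, hqX, hvX⟩).tail
                ⟨hadjvr, hvX, fun h => hright0 (hXsubσ h)⟩)
              (fun k h => hright k (hXsubσ h))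
          · by_cases hwv : w = v
            · have hreach : Relation.ReflTransGen (cRel X) v ((v.1 + 1, v.2) : ℤ × ℤ) :=
                Relation.ReflTransGen.single
                  ⟨hadjvr, hvX, fun h => hright0 (hXsubσ h)⟩
              refine comp_infinite_of_ray X (w := w) (u := ((v.1 + 1, v.2) : ℤ × ℤ))
                (by rw [hwv]; exact hreach)
                (fun k h => hright k (hXsubσ h))
            · have hwσ : w ∉ σ := fun h => hw1 (Finset.mem_erase_of_ne_of_mem hwv h)
              exact (hhole w hwσ).mono (comp_mono hXsubσ w)
        have hXlt : X.card < n := by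
          have := Finset.card_le_card hXsub
          omega
        exact ih X.card hXlt X rfl hholeX hconnX
      -- apply to the two pieces
      have hadjav : TriAdj ((v.1 - 1, v.2) : ℤ × ℤ) v := by rw [triAdj_iff]; simp; try omega
      have hadjcv : TriAdj ((v.1, v.2 - 1) : ℤ × ℤ) v := by rw [triAdj_iff]; simp; try omega
      have hane : ((v.1 - 1, v.2) : ℤ × ℤ) ≠ v := by simp [Prod.ext_iff]
      have hcne : ((v.1, v.2 - 1) : ℤ × ℤ) ≠ v := by simp [Prod.ext_iff]
      have hEA := hkey _ _ ha hc hane hcne hadjav hadjcv hjordan hpart2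
      have hEC := hkey _ _ hc ha hcne hane hadjcv hadjav
        (fun h => hjordan (rtg_symm h)) (fun x hx => (hpart2 x hx).symm)
      set A := (σ.erase v).filter
        (fun x => Relation.ReflTransGen (aRel (σ.erase v)) x ((v.1 - 1, v.2) : ℤ × ℤ)) with hA
      set C := (σ.erase v).filter
        (fun x => Relation.ReflTransGen (aRel (σ.erase v)) x ((v.1, v.2 - 1) : ℤ × ℤ)) with hC
      have hpart : ∀ x, x ∈ σ.erase v ↔ (x ∈ A ∨ x ∈ C) := by
        intro x
        constructor
        · intro hx
          rcases hpart2 x hx with h | h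
          · exact Or.inl (Finset.mem_filter.mpr ⟨hx, h⟩)
          · exact Or.inr (Finset.mem_filter.mpr ⟨hx, h⟩)
        · rintro (h | h)
          · exact (Finset.mem_filter.mp h).1
          · exact (Finset.mem_filter.mp h).1
      have hdisj : ∀ x, ¬(x ∈ A ∧ x ∈ C) := by
        rintro x ⟨hxA, hxC⟩
        exact hjordan ((rtg_symm (Finset.mem_filter.mp hxA).2).trans
          (Finset.mem_filter.mp hxC).2)
      have hclosed : ∀ x y, x ∈ σ.erase v → y ∈ σ.erase v → TriAdj x y → (x ∈ A ↔ y ∈ A) := by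
        intro x y hx hy hadj
        constructor
        · intro hxA
          exact Finset.mem_filter.mpr ⟨hy,
            Relation.ReflTransGen.head ⟨triAdj_symm hadj, hy, hx⟩
              (Finset.mem_filter.mp hxA).2⟩
        · intro hyA
          exact Finset.mem_filter.mpr ⟨hx,
            Relation.ReflTransGen.head ⟨hadj, hx, hy⟩ (Finset.mem_filter.mp hyA).2⟩
      have hcards := card_split hpart hdisj
      have hedges := edges_split hpart hdisj hclosed
      have htris := triangles_split hpart hdisj hclosed
      have he := edges_erase hmax hv
      have ht := triangles_erase hmax hv
      rw [if_pos ha, if_pos hc, if_neg hb] at he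
      rw [if_neg (fun h => hb h.1), if_neg (fun h => hb h.1)] at ht
      omega
    · -- only a occupied
      have hgood := goodstep (fun s t hs ht => by
          have hsa : s = ((v.1 - 1, v.2) : ℤ × ℤ) := by
            rcases hnbr s hs with rfl | rfl | rfl
            exacts [rfl, absurd hs.2.1 hc, absurd hs.2.1 hb]
          have hta : t = ((v.1 - 1, v.2) : ℤ × ℤ) := by
            rcases hnbr t ht with rfl | rfl | rfl
            exacts [rfl, absurd ht.2.1 hc, absurd ht.2.1 hb]
          rw [hsa, hta])
        ⟨_, ⟨by rw [triAdj_iff]; simp; try omega, ha, hv⟩⟩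
      have he := edges_erase hmax hv
      have ht := triangles_erase hmax hv
      rw [if_pos ha, if_neg hc, if_neg hb] at he
      rw [if_neg (fun h => hb h.1), if_neg (fun h => hb h.1)] at ht
      omega
    · -- only c occupied
      have hgood := goodstep (fun s t hs ht => by
          have hsa : s = ((v.1, v.2 - 1) : ℤ × ℤ) := by
            rcases hnbr s hs with rfl | rfl | rfl
            exacts [absurd hs.2.1 ha, rfl, absurd hs.2.1 hb]
          have hta : t = ((v.1, v.2 - 1) : ℤ × ℤ) := by
            rcases hnbr t ht with rfl | rfl | rfl
            exacts [absurd ht.2.1 ha, rfl, absurd ht.2.1 hb]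
          rw [hsa, hta])
        ⟨_, ⟨by rw [triAdj_iff]; simp; try omega, hc, hv⟩⟩
      have he := edges_erase hmax hv
      have ht := triangles_erase hmax hv
      rw [if_neg ha, if_pos hc, if_neg hb] at he
      rw [if_neg (fun h => hb h.1), if_neg (fun h => hb h.1)] at ht
      omega
    · -- v is isolated: σ = {v}
      have hsingle : σ = {v} := by
        refine Finset.eq_singleton_iff_unique_mem.mpr ⟨hv, fun w hw => ?_⟩
        by_contra hwv
        obtain ⟨s, hs⟩ := rtg_exists_last (hpath w hw v hv) hwv
        rcases hnbr s hs with rfl | rfl | rfl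
        exacts [ha hs.2.1, hc hs.2.1, hb hs.2.1]
      subst hsingle
      have he : edges {v} = 0 := by
        simp [edges, Finset.filter_singleton, shift, Prod.ext_iff]
      have ht : triangles {v} = 0 := by
        simp [triangles, Finset.filter_singleton, shift, Prod.ext_iff]
      rw [he, ht]
      simp


section Perim

lemma sum_indic_count (F : Finset (ℤ × ℤ)) (P : ℤ × ℤ → Prop) [DecidablePred P] :
    (((∑ v ∈ F, (if P v then 0 else 1)) : ℕ) : ℤ) = F.card - (F.filter P).card := by
  have h1 : (∑ v ∈ F, (if P v then (0:ℕ) else 1)) =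
      (F.filter (fun v => ¬ P v)).card := by
    rw [Finset.card_filter]
    apply Finset.sum_congr rfl
    intro v _
    by_cases h : P v <;> simp [h]
  rw [h1]
  have h2 := Finset.card_filter_add_card_filter_not (s := F) P
  omega

lemma shift_shift (v d e : ℤ × ℤ) : shift (shift v d) e = (v.1 + d.1 + e.1, v.2 + d.2 + e.2) := by
  simp [shift]

variable (σ : Config)

lemma bij1 : (σ.filter (fun v => shift v (1,0) ∈ σ ∧ shift v (0,-1) ∈ σ)).card =
    (σ.filter (fun v => shift v (0,1) ∈ σ ∧ shift v (1,1) ∈ σ)).card := by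
  classical
  refine Finset.card_bij' (fun v _ => shift v (0,-1)) (fun w _ => shift w (0,1))
    ?_ ?_ ?_ ?_
  · intro v hv
    obtain ⟨hv1, hv2, hv3⟩ := Finset.mem_filter.mp hv
    refine Finset.mem_filter.mpr ⟨hv3, ?_, ?_⟩
    · rw [shift_shift]
      simpa [shift] using hv1
    · rw [shift_shift]
      simpa [shift] using hv2
  · intro w hw
    obtain ⟨hw1, hw2, hw3⟩ := Finset.mem_filter.mp hw
    refine Finset.mem_filter.mpr ⟨hw2, ?_, ?_⟩
    · rw [shift_shift]
      simpa [shift] using hw3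
    · rw [shift_shift]
      simpa [shift] using hw1
  · intro v _; simp [shift_shift, shift, Prod.ext_iff]
  · intro w _; simp [shift_shift, shift, Prod.ext_iff]

lemma bij2 : (σ.filter (fun v => shift v (0,1) ∈ σ ∧ shift v (-1,0) ∈ σ)).card =
    (σ.filter (fun v => shift v (1,0) ∈ σ ∧ shift v (1,1) ∈ σ)).card := by
  classical
  refine Finset.card_bij' (fun v _ => shift v (-1,0)) (fun w _ => shift w (1,0))
    ?_ ?_ ?_ ?_
  · intro v hv
    obtain ⟨hv1, hv2, hv3⟩ := Finset.mem_filter.mp hv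
    refine Finset.mem_filter.mpr ⟨hv3, ?_, ?_⟩
    · rw [shift_shift]
      simpa [shift] using hv1
    · rw [shift_shift]
      simpa [shift] using hv2
  · intro w hw
    obtain ⟨hw1, hw2, hw3⟩ := Finset.mem_filter.mp hw
    refine Finset.mem_filter.mpr ⟨hw2, ?_, ?_⟩
    · rw [shift_shift]
      simpa [shift] using hw3
    · rw [shift_shift]
      simpa [shift] using hw1
  · intro v _; simp [shift_shift, shift, Prod.ext_iff]
  · intro w _; simp [shift_shift, shift, Prod.ext_iff]

lemma perim_eq : (perim σ : ℤ) = 2 * edges σ - 3 * triangles σ := by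
  classical
  have e1 := sum_indic_count (σ.filter (fun v => shift v (1,0) ∈ σ))
    (fun v => shift v (1,1) ∈ σ)
  have e2 := sum_indic_count (σ.filter (fun v => shift v (1,0) ∈ σ))
    (fun v => shift v (0,-1) ∈ σ)
  have e3 := sum_indic_count (σ.filter (fun v => shift v (0,1) ∈ σ))
    (fun v => shift v (1,1) ∈ σ)
  have e4 := sum_indic_count (σ.filter (fun v => shift v (0,1) ∈ σ))
    (fun v => shift v (-1,0) ∈ σ)
  have e5 := sum_indic_count (σ.filter (fun v => shift v (1,1) ∈ σ))
    (fun v => shift v (1,0) ∈ σ)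
  have e6 := sum_indic_count (σ.filter (fun v => shift v (1,1) ∈ σ))
    (fun v => shift v (0,1) ∈ σ)
  rw [Finset.filter_filter] at e1 e2 e3 e4 e5 e6
  have hb1 := bij1 σ
  have hb2 := bij2 σ
  have hc5 : (σ.filter (fun v => shift v (1,1) ∈ σ ∧ shift v (1,0) ∈ σ)).card =
      (σ.filter (fun v => shift v (1,0) ∈ σ ∧ shift v (1,1) ∈ σ)).card := by
    congr 1
    apply Finset.filter_congr
    intro v _
    exact and_comm
  have hc6 : (σ.filter (fun v => shift v (1,1) ∈ σ ∧ shift v (0,1) ∈ σ)).card =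
      (σ.filter (fun v => shift v (0,1) ∈ σ ∧ shift v (1,1) ∈ σ)).card := by
    congr 1
    apply Finset.filter_congr
    intro v _
    exact and_comm
  simp only [perim, edges, triangles]
  rw [Finset.sum_add_distrib, Finset.sum_add_distrib, Finset.sum_add_distrib]
  push_cast [-Nat.cast_sum]
  rw [e1, e2, e3, e4, e5, e6]
  rw [hb1, hb2, hc5, hc6] at *
  push_cast at hb1 hb2 hc5 hc6 ⊢
  ring

end Perim


/-- for a connected hole-free configuration σ of n particles,
e(σ) = 3n − p(σ) − 3. -/
theorem edges_eq_perimeter (σ : Config) (n : ℕ) (hcard : σ.card = n)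
    (hconn : ConnectedConfig σ) (hhole : HoleFree σ) :
    (edges σ : ℤ) = 3 * n - perim σ - 3 := by
  subst hcard
  have hperim := perim_eq σ
  have heuler := euler_conn σ.card σ rfl hhole hconn
  omega
end

section
/- For every integer n ≥ 1, the number of connected hole-free configurations of n particles on the triangular lattice with perimeter exactly 2n − 2 is at least 2^(n−1). -/
open Finset

namespace MaxPerim

def sfun (b : ℕ → Bool) : ℕ → ℤ
  | 0 => 0
  | k+1 => sfun b k + (if b k then 1 else 0)

def F (b : ℕ → Bool) (k : ℕ) : ℤ × ℤ := ((k : ℤ), sfun b k)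

def pathCfg (n : ℕ) (b : ℕ → Bool) : Config := (Finset.range n).image (F b)

lemma F_inj (b : ℕ → Bool) : Function.Injective (F b) := by
  intro i j h
  have : (i : ℤ) = j := congrArg Prod.fst h
  exact_mod_cast this

lemma mem_pathCfg {n : ℕ} {b : ℕ → Bool} {x y : ℤ} :
    (x, y) ∈ pathCfg n b ↔ ∃ k : ℕ, k < n ∧ x = (k : ℤ) ∧ y = sfun b k := by
  simp [pathCfg, F, Prod.ext_iff, eq_comm, and_assoc]

lemma F_mem {n : ℕ} {b : ℕ → Bool} {k : ℕ} (h : k < n) : F b k ∈ pathCfg n b := by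
  exact Finset.mem_image_of_mem _ (Finset.mem_range.2 h)

lemma mem_pathCfg' {n : ℕ} {b : ℕ → Bool} {k : ℕ} {y : ℤ} (hk : k < n) :
    ((k : ℤ), y) ∈ pathCfg n b ↔ y = sfun b k := by
  rw [mem_pathCfg]
  constructor
  · rintro ⟨j, hj, hx, hy⟩
    have : j = k := by exact_mod_cast hx.symm
    subst this; exact hy
  · intro h; exact ⟨k, hk, rfl, h⟩

lemma sfun_succ (b : ℕ → Bool) (k : ℕ) :
    sfun b (k + 1) = sfun b k + (if b k then 1 else 0) := rfl

lemma triAdj_symm : Symmetric TriAdj := by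
  intro a c h
  simp [TriAdj, triNbrs, Prod.ext_iff] at *
  omega

lemma adj_succ (b : ℕ → Bool) (k : ℕ) : TriAdj (F b k) (F b (k + 1)) := by
  cases h : b k <;>
    simp [TriAdj, F, sfun_succ, h, triNbrs, Prod.ext_iff] <;> push_cast <;> omega

end MaxPerim
namespace MaxPerim

lemma chain {n : ℕ} (b : ℕ → Bool) :
    ∀ k, k < n → Relation.ReflTransGen
      (fun a c => TriAdj a c ∧ a ∈ pathCfg n b ∧ c ∈ pathCfg n b) (F b 0) (F b k) := by
  intro k
  induction k with
  | zero => intro _; exact Relation.ReflTransGen.refl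
  | succ k ih =>
    intro hk
    have hk' : k < n := by omega
    exact (ih hk').tail ⟨adj_succ b k, F_mem hk', F_mem hk⟩

lemma connected_pathCfg {n : ℕ} (hn : 1 ≤ n) (b : ℕ → Bool) :
    ConnectedConfig (pathCfg n b) := by
  have h0 : F b 0 ∈ pathCfg n b := F_mem hn
  refine ⟨⟨F b 0, h0⟩, ?_⟩
  have hsym : Symmetric (fun a c => TriAdj a c ∧ a ∈ pathCfg n b ∧ c ∈ pathCfg n b) :=
    fun a c ⟨h1, h2, h3⟩ => ⟨triAdj_symm h1, h3, h2⟩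
  rintro v hv w hw
  obtain ⟨k, hk, rfl⟩ := Finset.mem_image.1 hv
  obtain ⟨j, hj, rfl⟩ := Finset.mem_image.1 hw
  rw [Finset.mem_range] at hk hj
  exact ((@Relation.ReflTransGen.stdSymm _ _ ⟨fun _ _ h => hsym h⟩).symm _ _ (chain b k hk)).trans (chain b j hj)

lemma ray_mem (σ : Config) (x y d : ℤ) (hd : ((0 : ℤ), d) ∈ triNbrs)
    (h : ∀ t : ℕ, (x, y + d * t) ∉ σ) :
    ∀ t : ℕ, (x, y + d * t) ∈ compComponent σ (x, y) := by
  intro t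
  induction t with
  | zero =>
    simp only [Nat.cast_zero, mul_zero, add_zero, compComponent, Set.mem_setOf_eq]
    exact Relation.ReflTransGen.refl
  | succ t ih =>
    refine Relation.ReflTransGen.tail ih ⟨?_, h t, h (t + 1)⟩
    have e : ((x : ℤ) - x, (y + d * ((t : ℤ) + 1)) - (y + d * t)) = ((0 : ℤ), d) := by
      simp only [Prod.mk.injEq]
      constructor <;> ring
    show ((x : ℤ) - x, (y + d * (((t : ℕ) + 1 : ℕ) : ℤ)) - (y + d * t)) ∈ triNbrs
    push_cast
    rw [e]
    exact hd

lemma infinite_ray (σ : Config) (x y d : ℤ) (hd : ((0 : ℤ), d) ∈ triNbrs) (hd0 : d ≠ 0)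
    (h : ∀ t : ℕ, (x, y + d * t) ∉ σ) : (compComponent σ (x, y)).Infinite := by
  refine Set.infinite_of_injective_forall_mem (f := fun t : ℕ => (x, y + d * t)) ?_ ?_
  · intro t t' ht
    simp only [Prod.mk.injEq, true_and] at ht
    have : d * (t : ℤ) = d * t' := by omega
    exact_mod_cast mul_left_cancel₀ hd0 this
  · exact fun t => ray_mem σ x y d hd h t

lemma holeFree_pathCfg {n : ℕ} (b : ℕ → Bool) : HoleFree (pathCfg n b) := by
  rintro ⟨x, y⟩ hv
  by_cases hx : ∃ k : ℕ, k < n ∧ x = (k : ℤ)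
  · obtain ⟨k, hk, rfl⟩ := hx
    have hy : y ≠ sfun b k := fun h => hv ((mem_pathCfg' hk).2 h)
    rcases lt_or_gt_of_ne hy with hlt | hgt
    · refine infinite_ray _ _ _ (-1) (by simp [triNbrs]) (by norm_num) ?_
      intro t hmem
      have := (mem_pathCfg' hk).1 hmem
      omega
    · refine infinite_ray _ _ _ 1 (by simp [triNbrs]) (by norm_num) ?_
      intro t hmem
      have := (mem_pathCfg' hk).1 hmem
      omega
  · refine infinite_ray _ _ _ 1 (by simp [triNbrs]) (by norm_num) ?_
    intro t hmem
    obtain ⟨j, hj, hxe, -⟩ := mem_pathCfg.1 hmem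
    exact hx ⟨j, hj, hxe⟩

end MaxPerim
namespace MaxPerim

lemma card_pathCfg (n : ℕ) (b : ℕ → Bool) : (pathCfg n b).card = n := by
  rw [pathCfg, Finset.card_image_of_injective _ (F_inj b), Finset.card_range]

lemma normalized_pathCfg {n : ℕ} (hn : 1 ≤ n) (b : ℕ → Bool) :
    Normalized (pathCfg n b) := by
  constructor
  · have : F b 0 = ((0 : ℤ), (0 : ℤ)) := rfl
    rw [← this]; exact F_mem hn
  · rintro ⟨x, y⟩ hv
    obtain ⟨k, hk, rfl, rfl⟩ := mem_pathCfg.1 hv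
    rcases Nat.eq_zero_or_pos k with rfl | hpos
    · exact Or.inr ⟨rfl, le_refl _⟩
    · left; show (0 : ℤ) < (k : ℤ); exact_mod_cast hpos

lemma sfun_succ_false {b : ℕ → Bool} {k : ℕ} (hb : b k = false) :
    sfun b (k + 1) = sfun b k := by simp [sfun_succ, hb]

lemma sfun_succ_true {b : ℕ → Bool} {k : ℕ} (hb : b k = true) :
    sfun b (k + 1) = sfun b k + 1 := by simp [sfun_succ, hb]

lemma perim_pathCfg {n : ℕ} (hn : 1 ≤ n) (b : ℕ → Bool) :
    perim (pathCfg n b) = 2 * n - 2 := by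
  classical
  set σ := pathCfg n b with hσ
  have hQ1 : (Finset.range n).filter (fun k => shift (F b k) (1, 0) ∈ σ)
      = (Finset.range (n - 1)).filter (fun k => b k = false) := by
    ext k
    simp only [Finset.mem_filter, Finset.mem_range]
    constructor
    · rintro ⟨hk, hmem⟩
      have hmem' : ((k : ℤ) + 1, sfun b k + 0) ∈ σ := hmem
      obtain ⟨j, hj, hx, hy⟩ := mem_pathCfg.1 hmem'
      have hjk : j = k + 1 := by omega
      subst hjk
      cases hb : b k
      · exact ⟨by omega, rfl⟩
      · rw [sfun_succ_true hb] at hy; omega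
    · rintro ⟨hk, hb⟩
      refine ⟨by omega, ?_⟩
      show ((k : ℤ) + 1, sfun b k + 0) ∈ σ
      have e : ((k : ℤ) + 1) = ((k + 1 : ℕ) : ℤ) := by push_cast; ring
      rw [e, mem_pathCfg' (by omega), sfun_succ_false hb]
      ring
  have hQ3 : (Finset.range n).filter (fun k => shift (F b k) (1, 1) ∈ σ)
      = (Finset.range (n - 1)).filter (fun k => b k = true) := by
    ext k
    simp only [Finset.mem_filter, Finset.mem_range]
    constructor
    · rintro ⟨hk, hmem⟩
      have hmem' : ((k : ℤ) + 1, sfun b k + 1) ∈ σ := hmem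
      obtain ⟨j, hj, hx, hy⟩ := mem_pathCfg.1 hmem'
      have hjk : j = k + 1 := by omega
      subst hjk
      cases hb : b k
      · rw [sfun_succ_false hb] at hy; omega
      · exact ⟨by omega, rfl⟩
    · rintro ⟨hk, hb⟩
      refine ⟨by omega, ?_⟩
      show ((k : ℤ) + 1, sfun b k + 1) ∈ σ
      have e : ((k : ℤ) + 1) = ((k + 1 : ℕ) : ℤ) := by push_cast; ring
      rw [e, mem_pathCfg' (by omega), sfun_succ_true hb]
  have hQ2 : (Finset.range n).filter (fun k => shift (F b k) (0, 1) ∈ σ) = ∅ := by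
    ext k
    simp only [Finset.mem_filter, Finset.mem_range, Finset.notMem_empty, iff_false, not_and]
    intro hk hmem
    have hmem' : ((k : ℤ), sfun b k + 1) ∈ σ := hmem
    have := (mem_pathCfg' hk).1 hmem'
    omega
  have hfilt : ∀ d : ℤ × ℤ, σ.filter (fun v => shift v d ∈ σ)
      = ((Finset.range n).filter (fun k => shift (F b k) d ∈ σ)).image (F b) := by
    intro d
    rw [hσ, pathCfg, Finset.filter_image]
  have hsum : ∀ (d : ℤ × ℤ) (g : ℤ × ℤ → ℕ),
      (∑ v ∈ σ.filter (fun v => shift v d ∈ σ), g v)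
        = ∑ k ∈ (Finset.range n).filter (fun k => shift (F b k) d ∈ σ), g (F b k) := by
    intro d g
    rw [hfilt d, Finset.sum_image (fun a _ c _ h => F_inj b h)]
  have key1 : ∀ k ∈ (Finset.range (n-1)).filter (fun k => b k = false),
      ((if shift (F b k) (1,1) ∈ σ then 0 else 1) + (if shift (F b k) (0,-1) ∈ σ then 0 else 1)) = 2 := by
    intro k hk
    simp only [Finset.mem_filter, Finset.mem_range] at hk
    obtain ⟨hk1, hb⟩ := hk
    have h1 : shift (F b k) (1,1) ∉ σ := by
      intro hmem
      have hmem' : ((k : ℤ) + 1, sfun b k + 1) ∈ σ := hmem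
      have e : ((k : ℤ) + 1) = ((k + 1 : ℕ) : ℤ) := by push_cast; ring
      rw [e, mem_pathCfg' (by omega), sfun_succ_false hb] at hmem'
      omega
    have h2 : shift (F b k) (0,-1) ∉ σ := by
      intro hmem
      have hmem' : ((k : ℤ), sfun b k + -1) ∈ σ := hmem
      have := (mem_pathCfg' (show k < n by omega)).1 hmem'
      omega
    rw [if_neg h1, if_neg h2]
  have key3 : ∀ k ∈ (Finset.range (n-1)).filter (fun k => b k = true),
      ((if shift (F b k) (1,0) ∈ σ then 0 else 1) + (if shift (F b k) (0,1) ∈ σ then 0 else 1)) = 2 := by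
    intro k hk
    simp only [Finset.mem_filter, Finset.mem_range] at hk
    obtain ⟨hk1, hb⟩ := hk
    have h1 : shift (F b k) (1,0) ∉ σ := by
      intro hmem
      have hmem' : ((k : ℤ) + 1, sfun b k + 0) ∈ σ := hmem
      have e : ((k : ℤ) + 1) = ((k + 1 : ℕ) : ℤ) := by push_cast; ring
      rw [e, mem_pathCfg' (by omega), sfun_succ_true hb] at hmem'
      omega
    have h2 : shift (F b k) (0,1) ∉ σ := by
      intro hmem
      have hmem' : ((k : ℤ), sfun b k + 1) ∈ σ := hmem
      have := (mem_pathCfg' (show k < n by omega)).1 hmem'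
      omega
    rw [if_neg h1, if_neg h2]
  rw [perim, hsum (1,0), hsum (0,1), hsum (1,1), hQ1, hQ2, hQ3]
  rw [Finset.sum_congr rfl key1, Finset.sum_congr rfl key3]
  rw [Finset.sum_const, Finset.sum_const, Finset.sum_empty]
  have hcards : ((Finset.range (n-1)).filter (fun k => b k = false)).card
      + ((Finset.range (n-1)).filter (fun k => b k = true)).card = n - 1 := by
    have h2 : (Finset.range (n-1)).filter (fun k => b k = false)
        = (Finset.range (n-1)).filter (fun k => ¬ b k = true) := by
      apply Finset.filter_congr; intro k _; simp
    rw [h2, add_comm]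
    exact (Finset.card_filter_add_card_filter_not
      (s := Finset.range (n-1)) (p := fun k => b k = true)).trans (Finset.card_range _)
  simp only [smul_eq_mul]
  omega

end MaxPerim
namespace MaxPerim

lemma sfun_eq_of_cfg_eq {n : ℕ} {b b' : ℕ → Bool} (h : pathCfg n b = pathCfg n b') :
    ∀ k, k < n → sfun b k = sfun b' k := by
  intro k hk
  have : F b k ∈ pathCfg n b' := h ▸ F_mem hk
  exact (mem_pathCfg' hk).1 this

lemma pathCfg_inj {n : ℕ} (hn : 1 ≤ n) : Function.Injective
    (fun b : Fin (n - 1) → Bool =>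
      pathCfg n (fun k => if h : k < n - 1 then b ⟨k, h⟩ else false)) := by
  intro b b' he
  simp only at he
  funext i
  have h1 := sfun_eq_of_cfg_eq he i.1 (by omega)
  have h2 := sfun_eq_of_cfg_eq he (i.1 + 1) (by omega)
  rw [sfun_succ, sfun_succ] at h2
  have hi : i.1 < n - 1 := i.2
  simp only [hi, dif_pos] at h2
  have : (if b ⟨i.1, hi⟩ then (1:ℤ) else 0) = (if b' ⟨i.1, hi⟩ then 1 else 0) := by omega
  have hb : b ⟨i.1, hi⟩ = b' ⟨i.1, hi⟩ := by
    cases hx : b ⟨i.1, hi⟩ <;> cases hy : b' ⟨i.1, hi⟩ <;> rw [hx, hy] at this <;> simp_all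
  simpa using hb

lemma adj_bounds {a c : ℤ × ℤ} (h : TriAdj a c) :
    c.1 - a.1 ≤ 1 ∧ a.1 - c.1 ≤ 1 ∧ c.2 - a.2 ≤ 1 ∧ a.2 - c.2 ≤ 1 := by
  simp [TriAdj, triNbrs, Prod.ext_iff] at h
  omega

lemma reach_fst (σ : Config) {v w : ℤ × ℤ}
    (h : Relation.ReflTransGen (fun a c => TriAdj a c ∧ a ∈ σ ∧ c ∈ σ) v w) (hv : v ∈ σ) :
    ∀ t : ℤ, ((v.1 ≤ t ∧ t ≤ w.1) ∨ (w.1 ≤ t ∧ t ≤ v.1)) → ∃ u ∈ σ, u.1 = t := by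
  induction h with
  | refl => intro t ht; exact ⟨v, hv, by omega⟩
  | @tail p q h1 h2 ih =>
    intro t ht
    have hbd := adj_bounds h2.1
    by_cases hq : t = q.1
    · exact ⟨q, h2.2.2, hq.symm⟩
    · exact ih t (by omega)

lemma reach_snd (σ : Config) {v w : ℤ × ℤ}
    (h : Relation.ReflTransGen (fun a c => TriAdj a c ∧ a ∈ σ ∧ c ∈ σ) v w) (hv : v ∈ σ) :
    ∀ t : ℤ, ((v.2 ≤ t ∧ t ≤ w.2) ∨ (w.2 ≤ t ∧ t ≤ v.2)) → ∃ u ∈ σ, u.2 = t := by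
  induction h with
  | refl => intro t ht; exact ⟨v, hv, by omega⟩
  | @tail p q h1 h2 ih =>
    intro t ht
    have hbd := adj_bounds h2.1
    by_cases hq : t = q.2
    · exact ⟨q, h2.2.2, hq.symm⟩
    · exact ih t (by omega)

lemma interval_card (σ : Config) (proj : ℤ × ℤ → ℤ) (a c : ℤ)
    (hex : ∀ t, t ∈ Finset.Icc a c → ∃ u ∈ σ, proj u = t) :
    (Finset.Icc a c).card ≤ σ.card := by
  classical
  refine Finset.card_le_card_of_injOn
    (fun t => if h : ∃ u ∈ σ, proj u = t then h.choose else ((0 : ℤ), (0 : ℤ))) ?_ ?_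
  · intro t ht
    have h := hex t ht
    simp only [dif_pos h]
    exact h.choose_spec.1
  · intro t ht t' ht' hee
    rw [Finset.mem_coe] at ht ht'
    have h := hex t ht
    have h' := hex t' ht'
    simp only [dif_pos h, dif_pos h'] at hee
    have e1 := h.choose_spec.2
    have e2 := h'.choose_spec.2
    rw [← e1, ← e2, hee]

lemma coord_bounds {n : ℕ} {σ : Config} (hcard : σ.card = n) (hconn : ConnectedConfig σ)
    (hnorm : Normalized σ) : ∀ v ∈ σ, 0 ≤ v.1 ∧ v.1 < (n : ℤ) ∧ -(n : ℤ) < v.2 ∧ v.2 < (n : ℤ) := by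
  intro v hv
  have h0 : ((0, 0) : ℤ × ℤ) ∈ σ := hnorm.1
  have hrt := hconn.2 _ h0 _ hv
  have hx0 : 0 ≤ v.1 := by
    rcases hnorm.2 v hv with h | h
    · exact le_of_lt h
    · exact le_of_eq h.1
  have hex1 : ∀ t, t ∈ Finset.Icc (0 : ℤ) v.1 → ∃ u ∈ σ, u.1 = t := by
    intro t ht
    rw [Finset.mem_Icc] at ht
    exact reach_fst σ hrt h0 t (Or.inl ht)
  have hex2 : ∀ t, t ∈ Finset.Icc (min 0 v.2) (max 0 v.2) → ∃ u ∈ σ, u.2 = t := by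
    intro t ht
    rw [Finset.mem_Icc] at ht
    refine reach_snd σ hrt h0 t ?_
    rcases le_total 0 v.2 with hle | hle <;> [left; right] <;>
      constructor <;> simp_all [min_def, max_def] <;> omega
  have hc1 := interval_card σ Prod.fst 0 v.1 hex1
  have hc2 := interval_card σ Prod.snd (min 0 v.2) (max 0 v.2) hex2
  rw [Int.card_Icc, hcard] at hc1 hc2
  rcases le_total 0 v.2 with hle | hle <;> simp [min_def, max_def, hle] at hc2 <;> omega

lemma S_finite (n : ℕ) :
    {σ : Config | σ.card = n ∧ ConnectedConfig σ ∧ HoleFree σ ∧ Normalized σ ∧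
      perim σ = 2 * n - 2}.Finite := by
  classical
  apply Set.Finite.subset
    (Finset.finite_toSet (Finset.Icc ((0 : ℤ), -(n : ℤ)) ((n : ℤ), (n : ℤ))).powerset)
  rintro σ ⟨hcard, hconn, -, hnorm, -⟩
  rw [Finset.mem_coe, Finset.mem_powerset]
  intro v hv
  have := coord_bounds hcard hconn hnorm v hv
  rw [Finset.mem_Icc]
  constructor <;> rw [Prod.le_def] <;> constructor <;> simp <;> omega

end MaxPerim

/-- for every n ≥ 1, the number of connected hole-free
configurations of n particles with perimeter exactly 2n − 2, counted up to
translation (i.e., normalized), is at least 2^(n−1). -/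

theorem count_max_perimeter_configs (n : ℕ) (hn : 1 ≤ n) :
    2 ^ (n - 1) ≤
      {σ : Config | σ.card = n ∧ ConnectedConfig σ ∧ HoleFree σ ∧ Normalized σ ∧
        perim σ = 2 * n - 2}.ncard := by
  classical
  set S := {σ : Config | σ.card = n ∧ ConnectedConfig σ ∧ HoleFree σ ∧ Normalized σ ∧
      perim σ = 2 * n - 2} with hS
  have hfin : S.Finite := MaxPerim.S_finite n
  set g : (Fin (n - 1) → Bool) → Config := fun b =>
    MaxPerim.pathCfg n (fun k => if h : k < n - 1 then b ⟨k, h⟩ else false) with hg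
  have hginj : Function.Injective g := MaxPerim.pathCfg_inj hn
  have hsub : g '' Set.univ ⊆ S := by
    rintro _ ⟨b, -, rfl⟩
    exact ⟨MaxPerim.card_pathCfg n _, MaxPerim.connected_pathCfg hn _,
      MaxPerim.holeFree_pathCfg _, MaxPerim.normalized_pathCfg hn _,
      MaxPerim.perim_pathCfg hn _⟩
  calc 2 ^ (n - 1) = Nat.card (Fin (n - 1) → Bool) := by
        simp [Nat.card_eq_fintype_card]
    _ = (Set.univ : Set (Fin (n - 1) → Bool)).ncard := (Set.ncard_univ _).symm
    _ = (g '' Set.univ).ncard := (Set.ncard_image_of_injective _ hginj).symm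
    _ ≤ S.ncard := Set.ncard_le_ncard hsub hfin
end
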